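/- arXiv:1904.12504 — 4 statements merged into one kernel-verified Lean document; each statement's English description precedes it below -/
import Mathlib

section
/- For every finite dimensional module U over the Lie algebra g^x of polynomial vector fields spanned by {x^p d_u : p ∈ N^d, |p| ≥ 1, u ∈ C^d}, there exists an integer p ≫ 0 such that g^x_q U = 0 for all q ≥ p, where g^x_q = span{ x^m d_u : |m| = q+1 }. -/
/-- every finite dimensional module `U` over the Lie algebra `g^x`
of polynomial vector fields (spanned by `x^p d_u`, `|p| ≥ 1`) is annihilated by
`g^x_q = span{x^m d_u : |m| = q+1}` for all sufficiently large `q`. -/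
theorem stmt13 {d : ℕ} {L : Type*} [LieRing L] [LieAlgebra ℂ L]
    (Dx : (Fin d → ℕ) → (Fin d → ℂ) → L)
    (hlin : ∀ p, IsLinearMap ℂ (Dx p))
    (hzero : ∀ u, Dx 0 u = 0)
    (hbr : ∀ (p p' : Fin d → ℕ) (u v : Fin d → ℂ),
      ⁅Dx p u, Dx p' v⁆
        = ∑ i, (u i * (p' i : ℂ)) • Dx (p + p' - Pi.single i 1) v
          - ∑ i, (v i * (p i : ℂ)) • Dx (p + p' - Pi.single i 1) u)
    (hspan : Submodule.span ℂ {x : L | ∃ p u, x = Dx p u} = ⊤)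
    (G : ℕ → Submodule ℂ L)
    (hG : ∀ i, G i = Submodule.span ℂ
      {x : L | ∃ p u, (∑ j, p j) = i + 1 ∧ x = Dx p u})
    (U : Type*) [AddCommGroup U] [Module ℂ U]
    [LieRingModule L U] [LieModule ℂ L U] [FiniteDimensional ℂ U] :
    ∃ p : ℕ, ∀ q ≥ p, ∀ x ∈ G q, ∀ v : U, ⁅x, v⁆ = 0 := by
  classical
  set E : L := ∑ i : Fin d, Dx (Pi.single i 1) (Pi.single i 1) with hE
  have key : ∀ (m : Fin d → ℕ) (w : Fin d → ℂ),
      ⁅E, Dx m w⁆ = ((∑ j, (m j : ℂ)) - 1) • Dx m w := by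
    intro m w
    have hsub : ∀ k : Fin d, Pi.single k 1 + m - Pi.single k 1 = m := by
      intro k; funext j; simp [Pi.sub_apply, Pi.add_apply]
    have hterm : ∀ k : Fin d, ⁅Dx (Pi.single k 1) (Pi.single k 1), Dx m w⁆
        = (m k : ℂ) • Dx m w - (w k) • Dx m (Pi.single k 1) := by
      intro k
      rw [hbr]
      congr 1
      · rw [Finset.sum_eq_single k]
        · simp [hsub]
        · intro i _ hik
          simp [Pi.single_apply, hik]
        · simp
      · rw [Finset.sum_eq_single k]
        · simp [hsub]
        · intro i _ hik
          simp [Pi.single_apply, hik]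
        · simp
    have hsumlie : ∀ (s : Finset (Fin d)) (a : Fin d → L) (y : L),
        ⁅(∑ i ∈ s, a i), y⁆ = ∑ i ∈ s, ⁅a i, y⁆ := by
      intro s a y
      induction s using Finset.induction_on with
      | empty => simp
      | insert k t h ih => rw [Finset.sum_insert h, Finset.sum_insert h, add_lie, ih]
    rw [hE, hsumlie]
    simp only [hterm]
    rw [Finset.sum_sub_distrib, ← Finset.sum_smul, sub_smul, one_smul]
    congr 1
    let f : (Fin d → ℂ) →ₗ[ℂ] L := IsLinearMap.mk' (Dx m) (hlin m)
    have hf : ∀ y, Dx m y = f y := fun y => rfl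
    simp only [hf, ← map_smul, ← map_sum]
    congr 1
    funext j
    simp [Finset.sum_apply, Pi.single_apply]
  -- set up endomorphisms
  let T : Module.End ℂ U := LieModule.toEnd ℂ L U E
  let Φ : Module.End ℂ (Module.End ℂ U) :=
    LinearMap.mulLeft ℂ T - LinearMap.mulRight ℂ T
  have hfin : Set.Finite (Module.End.HasEigenvalue Φ) :=
    Module.End.finite_hasEigenvalue Φ
  have hNfin : {q : ℕ | Module.End.HasEigenvalue Φ (q : ℂ)}.Finite := by
    have : {q : ℕ | Module.End.HasEigenvalue Φ (q : ℂ)}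
        = (Nat.cast : ℕ → ℂ) ⁻¹' (Module.End.HasEigenvalue Φ) := rfl
    rw [this]
    exact Set.Finite.preimage (Nat.cast_injective.injOn) hfin
  obtain ⟨p, hp⟩ := hNfin.bddAbove
  refine ⟨p + 1, fun q hq x hx v => ?_⟩
  have hnoteig : ¬ Module.End.HasEigenvalue Φ (q : ℂ) := by
    intro h
    have : q ≤ p := hp h
    omega
  rw [hG] at hx
  induction hx using Submodule.span_induction with
  | mem x hxmem =>
    obtain ⟨m, w, hm, rfl⟩ := hxmem
    -- the operator of Dx m w
    set φ : Module.End ℂ U := LieModule.toEnd ℂ L U (Dx m w) with hφ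
    have heig : Φ φ = (q : ℂ) • φ := by
      ext u
      have h1 : ⁅E, Dx m w⁆ = (q : ℂ) • Dx m w := by
        rw [key]
        congr 1
        rw [← Nat.cast_sum, hm]
        push_cast
        ring
      have h2 : ⁅⁅E, Dx m w⁆, u⁆ = ⁅E, ⁅Dx m w, u⁆⁆ - ⁅Dx m w, ⁅E, u⁆⁆ :=
        lie_lie E (Dx m w) u
      show T (φ u) - φ (T u) = (q : ℂ) • φ u
      show ⁅E, ⁅Dx m w, u⁆⁆ - ⁅Dx m w, ⁅E, u⁆⁆ = (q : ℂ) • ⁅Dx m w, u⁆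
      rw [← h2, h1, smul_lie]
    have hzeroφ : φ = 0 := by
      by_contra hne
      exact hnoteig (Module.End.hasEigenvalue_of_hasEigenvector
        ⟨Module.End.mem_eigenspace_iff.mpr heig, hne⟩)
    have : φ v = 0 := by rw [hzeroφ]; rfl
    exact this
  | zero => simp
  | add a b _ _ ha hb => rw [add_lie, ha, hb, add_zero]
  | smul c a _ ha => rw [smul_lie, ha, smul_zero]
end

section
/- Let A₁, A₂ be associative unital C-algebras with A₁ of countable dimension, and V an irreducible A₁⊗A₂-module. Then V ≅ V₁ ⊗ V₂ as A₁⊗A₂-modules, where V₁ is an irreducible A₁-submodule of V (restricting the action along A₁ ≅ A₁⊗1), and V₂ = Hom_{A₁}(V₁, V) is an irreducible A₂-module under (a·f)(v) = (1⊗a)(f(v)). -/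
open scoped TensorProduct
open Polynomial Cardinal

section Core

lemma aux_root {D : Type*} [DivisionRing D] [Algebra ℂ D] (φ : D) :
    ∀ (n : ℕ) (q : ℂ[X]), q.natDegree ≤ n → q ≠ 0 → Polynomial.aeval φ q = 0 →
      ∃ c : ℂ, φ = algebraMap ℂ D c := by
  intro n
  induction n with
  | zero =>
    intro q hdeg hq h0
    exfalso
    obtain ⟨a, rfl⟩ := Polynomial.natDegree_eq_zero.mp (Nat.le_zero.mp hdeg)
    rw [aeval_C] at h0
    exact hq (by
      have : a = 0 := (_root_.map_eq_zero (algebraMap ℂ D)).mp h0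
      simp [this])
  | succ n ih =>
    intro q hdeg hq h0
    rcases Nat.eq_zero_or_pos q.natDegree with h | hpos
    · exact ih q (h.le.trans (Nat.zero_le n)) hq h0
    · obtain ⟨c, hc⟩ := IsAlgClosed.exists_root q (by
        intro hd
        have := Polynomial.natDegree_eq_zero_iff_degree_le_zero.mpr hd.le
        omega)
      obtain ⟨q', rfl⟩ := (Polynomial.dvd_iff_isRoot).mpr hc
      rw [map_mul] at h0
      rcases mul_eq_zero.mp h0 with h1 | h2
      · refine ⟨c, ?_⟩
        have h1' : φ - algebraMap ℂ D c = 0 := by simpa using h1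
        linear_combination (norm := noncomm_ring) h1'
      · have hq' : q' ≠ 0 := fun h => hq (by simp [h])
        refine ih q' ?_ hq' h2
        have := Polynomial.natDegree_mul (X_sub_C_ne_zero c) hq'
        rw [this, Polynomial.natDegree_X_sub_C] at hdeg
        omega

variable {A : Type*} [Ring A] [Algebra ℂ A] {M : Type*} [AddCommGroup M] [Module ℂ M]
  [Module A M] [IsScalarTower ℂ A M]

lemma endo_smulC (ψ : M →ₗ[A] M) (c : ℂ) (m : M) : ψ (c • m) = c • ψ m := by
  rw [← algebraMap_smul A c m, ψ.map_smul, algebraMap_smul]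

lemma dixmier [IsSimpleModule A M] (hrank : Module.rank ℂ M ≤ ℵ₀) (φ : M →ₗ[A] M) :
    ∃ c : ℂ, ∀ m : M, φ m = c • m := by
  classical
  haveI : SMulCommClass A ℂ M := SMulCommClass.symm _ _ _
  letI : DivisionRing (Module.End A M) := Module.End.instDivisionRing
  letI : Algebra ℂ (Module.End A M) := Module.End.instAlgebra ℂ A M
  by_cases halg : ∃ q : ℂ[X], q ≠ 0 ∧ aeval (φ : Module.End A M) q = 0
  · obtain ⟨q, hq, h0⟩ := halg
    obtain ⟨c, hc⟩ := aux_root φ q.natDegree q le_rfl hq h0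
    exact ⟨c, fun m => by
      have := congrArg (fun (ψ : Module.End A M) => ψ m) hc
      simpa [Module.algebraMap_end_apply] using this⟩
  · push_neg at halg
    exfalso
    haveI : Nontrivial M := IsSimpleModule.nontrivial A M
    obtain ⟨m₀, hm₀⟩ := exists_ne (0 : M)
    set u : ℂ → Module.End A M := fun c => aeval (φ : Module.End A M) (X - C c) with hu
    have hu0 : ∀ c, u c ≠ 0 := fun c => halg _ (X_sub_C_ne_zero c)
    set r : ℂ → M := fun c => ((u c)⁻¹ : Module.End A M) m₀ with hr
    have hli : LinearIndependent ℂ r := by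
      rw [linearIndependent_iff]
      intro l hl
      set q : ℂ[X] := ∑ c ∈ l.support, C (l c) * ∏ c' ∈ l.support.erase c, (X - C c') with hqdef
      have key : (aeval (φ : Module.End A M) q) m₀ = 0 := by
        have expand : (aeval (φ : Module.End A M) q) m₀
            = (aeval (φ : Module.End A M) (∏ c' ∈ l.support, (X - C c')))
              (∑ c ∈ l.support, l c • r c) := by
          rw [map_sum, LinearMap.sum_apply, map_sum]
          refine Finset.sum_congr rfl fun c hc => ?_
          have hsplit : (∏ c' ∈ l.support, (X - C c'))
              = (∏ c' ∈ l.support.erase c, (X - C c')) * (X - C c) := by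
            exact (Finset.prod_erase_mul _ _ hc).symm
          rw [endo_smulC, map_mul, aeval_C]
          have h2 : (aeval (φ : Module.End A M) (∏ c' ∈ l.support, (X - C c')))
              = (aeval (φ : Module.End A M) (∏ c' ∈ l.support.erase c, (X - C c'))) * (u c) := by
            rw [hsplit, map_mul]
          rw [h2]
          have happ : ((aeval (φ : Module.End A M) (∏ c' ∈ l.support.erase c, (X - C c'))) * (u c)) (r c)
              = (aeval (φ : Module.End A M) (∏ c' ∈ l.support.erase c, (X - C c'))) m₀ := by
            show (aeval (φ : Module.End A M) _) ((u c) (r c)) = _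
            congr 1
            show ((u c) * (u c)⁻¹) m₀ = m₀
            rw [mul_inv_cancel₀ (hu0 c)]
            rfl
          rw [happ]
          rfl
        have hsum : (∑ c ∈ l.support, l c • r c) = 0 := by
          rw [← hl, Finsupp.linearCombination_apply, Finsupp.sum]
        rw [expand, hsum, map_zero]
      have hq0 : q = 0 := by
        by_contra hq
        have hne := halg q hq
        have : m₀ = 0 := by
          have h3 : (((aeval (φ : Module.End A M) q)⁻¹) * (aeval (φ : Module.End A M) q)) m₀ = 0 := by
            show ((aeval (φ : Module.End A M) q)⁻¹) ((aeval (φ : Module.End A M) q) m₀) = 0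
            rw [key, map_zero]
          rwa [inv_mul_cancel₀ hne] at h3
        exact hm₀ this
      ext c₀
      simp only [Finsupp.coe_zero, Pi.zero_apply]
      by_cases hc₀ : c₀ ∈ l.support
      · have heval := congrArg (Polynomial.eval c₀) hq0
        rw [hqdef] at heval
        simp only [Polynomial.eval_finset_sum, Polynomial.eval_mul, Polynomial.eval_C,
          Polynomial.eval_prod, Polynomial.eval_sub, Polynomial.eval_X, Polynomial.eval_zero] at heval
        rw [Finset.sum_eq_single c₀] at heval
        · have hprodne : (∏ c' ∈ l.support.erase c₀, (c₀ - c')) ≠ 0 := by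
            refine Finset.prod_ne_zero_iff.mpr fun c' hc' => ?_
            have := Finset.ne_of_mem_erase hc'
            exact sub_ne_zero_of_ne (Ne.symm this)
          exact (mul_eq_zero.mp heval).resolve_right hprodne
        · intro c hc hne
          have : c₀ ∈ l.support.erase c := Finset.mem_erase.mpr ⟨Ne.symm hne, hc₀⟩
          rw [Finset.prod_eq_zero this (by ring), mul_zero]
        · intro h; exact absurd hc₀ h
      · exact Finsupp.notMem_support_iff.mp hc₀
    have hcard := hli.cardinal_lift_le_rank
    have h1 : Cardinal.lift.{0} (Module.rank ℂ M) ≤ Cardinal.lift.{0} (ℵ₀ : Cardinal) :=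
      Cardinal.lift_le.mpr hrank
    have h2 : Cardinal.lift (#ℂ) ≤ (ℵ₀ : Cardinal) := by
      simpa using hcard.trans h1
    rw [mk_complex, Cardinal.lift_continuum] at h2
    exact absurd h2 (not_le.mpr Cardinal.aleph0_lt_continuum)

variable {A : Type*} [Ring A] [Algebra ℂ A] {M : Type*} [AddCommGroup M] [Module ℂ M]
  [Module A M] [IsScalarTower ℂ A M]

lemma density [IsSimpleModule A M]
    (hEnd : ∀ φ : M →ₗ[A] M, ∃ c : ℂ, ∀ m, φ m = c • m) {ι : Type*} [DecidableEq ι] (v : ι → M) :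
    ∀ S : Finset ι, (∀ g : ι → ℂ, ∑ i ∈ S, g i • v i = 0 → ∀ i ∈ S, g i = 0) →
      ∀ j ∈ S, ∀ w : M, ∃ a : A, a • v j = w ∧ ∀ i ∈ S, i ≠ j → a • v i = 0 := by
  haveI : SMulCommClass ℂ A M := by infer_instance
  intro S
  induction S using Finset.strongInduction with
  | _ S ih =>
  intro hli j hj w
  by_cases hex : ∃ a : A, (∀ i ∈ S, i ≠ j → a • v i = 0) ∧ a • v j ≠ 0
  · -- build the submodule of achievable values at j
    obtain ⟨a₀, ha₀, hne⟩ := hex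
    let N : Submodule A M :=
      { carrier := {m | ∃ a : A, (∀ i ∈ S, i ≠ j → a • v i = 0) ∧ a • v j = m}
        add_mem' := by
          rintro m₁ m₂ ⟨a₁, h₁, rfl⟩ ⟨a₂, h₂, rfl⟩
          exact ⟨a₁ + a₂, fun i hi hij => by rw [add_smul, h₁ i hi hij, h₂ i hi hij, add_zero],
            by rw [add_smul]⟩
        zero_mem' := ⟨0, fun i _ _ => zero_smul A (v i), zero_smul A (v j)⟩
        smul_mem' := by
          rintro b m ⟨a, h, rfl⟩
          exact ⟨b * a, fun i hi hij => by rw [mul_smul, h i hi hij, smul_zero],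
            by rw [mul_smul]⟩ }
    have hNne : N ≠ ⊥ := by
      intro hbot
      have : a₀ • v j ∈ N := ⟨a₀, ha₀, rfl⟩
      rw [hbot, Submodule.mem_bot] at this
      exact hne this
    have hNtop : N = ⊤ := (eq_bot_or_eq_top N).resolve_left hNne
    have hwN : w ∈ N := hNtop ▸ Submodule.mem_top
    obtain ⟨a, ha, haj⟩ := hwN
    exact ⟨a, haj, ha⟩
  · exfalso
    have hcon : ∀ a : A, (∀ i ∈ S, i ≠ j → a • v i = 0) → a • v j = 0 := by
      intro a ha
      by_contra h
      exact hex ⟨a, ha, h⟩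
    set T := S.erase j with hT
    have huniq : ∀ a : A, (∀ i ∈ T, a • v i = 0) → a • v j = 0 := fun a ha =>
      hcon a fun i hi hij => ha i (Finset.mem_erase.mpr ⟨hij, hi⟩)
    have hliT : ∀ g : ι → ℂ, ∑ i ∈ T, g i • v i = 0 → ∀ i ∈ T, g i = 0 := by
      intro g hg i hi
      have hij : i ≠ j := (Finset.mem_erase.mp hi).1
      set g' : ι → ℂ := fun i => if i = j then 0 else g i with hg'
      have : ∑ i ∈ S, g' i • v i = 0 := by
        rw [← Finset.add_sum_erase _ _ hj]
        simp only [hg', if_pos rfl, zero_smul, zero_add, ← hT]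
        rw [← hg]
        exact Finset.sum_congr rfl fun i hi => by
          rw [if_neg (Finset.mem_erase.mp hi).1]
      have h4 := hli g' this i (Finset.mem_of_mem_erase hi)
      rw [hg'] at h4
      simpa [hij] using h4
    have ihT := ih T (Finset.erase_ssubset hj) hliT
    choose sel hsel1 hsel2 using ihT
    -- the scalar endomorphisms
    have hscalar : ∀ (i₀ : ι) (hi₀ : i₀ ∈ T), ∃ c : ℂ, ∀ w : M, sel i₀ hi₀ w • v j = c • w := by
      intro i₀ hi₀
      have hwd : ∀ (a : A), (∀ i ∈ T, i ≠ i₀ → a • v i = 0) →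
          sel i₀ hi₀ (a • v i₀) • v j = a • v j := by
        intro a ha
        have h1 := hsel1 i₀ hi₀ (a • v i₀)
        have h2 := hsel2 i₀ hi₀ (a • v i₀)
        have h3 : (sel i₀ hi₀ (a • v i₀) - a) • v j = 0 := by
          apply huniq
          intro i hi
          by_cases h : i = i₀
          · subst h
            rw [sub_smul, h1, sub_self]
          · rw [sub_smul, h2 i hi h, ha i hi h, sub_zero]
        rw [sub_smul, sub_eq_zero] at h3
        exact h3
      have hadd : ∀ w₁ w₂ : M, sel i₀ hi₀ (w₁ + w₂) • v j
          = sel i₀ hi₀ w₁ • v j + sel i₀ hi₀ w₂ • v j := by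
        intro w₁ w₂
        have h3 : (sel i₀ hi₀ (w₁ + w₂) - (sel i₀ hi₀ w₁ + sel i₀ hi₀ w₂)) • v j = 0 := by
          apply huniq
          intro i hi
          by_cases h : i = i₀
          · subst h
            rw [sub_smul, add_smul, hsel1, hsel1, hsel1, sub_self]
          · rw [sub_smul, add_smul, hsel2 _ _ _ i hi h, hsel2 _ _ _ i hi h,
              hsel2 _ _ _ i hi h, add_zero, sub_zero]
        rw [sub_smul, sub_eq_zero, add_smul] at h3
        exact h3
      have hsmul : ∀ (b : A) (w : M), sel i₀ hi₀ (b • w) • v j = b • (sel i₀ hi₀ w • v j) := by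
        intro b w
        have h3 : (sel i₀ hi₀ (b • w) - b * sel i₀ hi₀ w) • v j = 0 := by
          apply huniq
          intro i hi
          by_cases h : i = i₀
          · subst h
            rw [sub_smul, mul_smul, hsel1, hsel1, sub_self]
          · rw [sub_smul, mul_smul, hsel2 _ _ _ i hi h, hsel2 _ _ _ i hi h,
              smul_zero, sub_zero]
        rw [sub_smul, sub_eq_zero, mul_smul] at h3
        exact h3
      exact hEnd
        { toFun := fun w => sel i₀ hi₀ w • v j
          map_add' := hadd
          map_smul' := hsmul }
    choose cf hcf using hscalar
    set cf' : ι → ℂ := fun i => if h : i ∈ T then cf i h else 0 with hcf'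
    -- key identity
    have hkey : ∀ a : A, a • v j = a • ∑ i ∈ T, cf' i • v i := by
      intro a
      set a' : A := a - ∑ k ∈ T.attach, sel k.1 k.2 (a • v k.1) with ha'
      have hkill : ∀ i ∈ T, a' • v i = 0 := by
        intro i hi
        rw [ha', sub_smul, Finset.sum_smul]
        have : ∑ k ∈ T.attach, sel k.1 k.2 (a • v k.1) • v i = a • v i := by
          rw [Finset.sum_eq_single_of_mem (⟨i, hi⟩ : {x // x ∈ T}) (Finset.mem_attach _ _)]
          · exact hsel1 i hi (a • v i)
          · intro k _ hk
            refine hsel2 k.1 k.2 (a • v k.1) i hi ?_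
            intro h
            exact hk (Subtype.ext h.symm)
        rw [this, sub_self]
      have h0 := huniq a' hkill
      rw [ha', sub_smul, sub_eq_zero] at h0
      rw [h0]
      have : ∑ k ∈ T.attach, sel k.1 k.2 (a • v k.1) • v j
          = ∑ k ∈ T.attach, cf' k.1 • (a • v k.1) := by
        refine Finset.sum_congr rfl fun k _ => ?_
        rw [hcf k.1 k.2]
        have hk : cf' k.1 = cf k.1 k.2 := dif_pos k.2
        rw [hk]
      rw [Finset.sum_smul] at *
      rw [this]
      rw [Finset.smul_sum]
      rw [← Finset.sum_attach T (fun i => a • cf' i • v i)]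
      refine Finset.sum_congr rfl fun k _ => ?_
      rw [smul_comm]
    have hfin := hkey 1
    simp only [one_smul] at hfin
    -- contradiction with linear independence
    set g : ι → ℂ := fun i => if i = j then 1 else -cf' i with hg
    have hsum : ∑ i ∈ S, g i • v i = 0 := by
      rw [← Finset.add_sum_erase _ _ hj, ← hT]
      have h1 : g j = 1 := by rw [hg]; simp
      have h2 : ∑ i ∈ T, g i • v i = -∑ i ∈ T, cf' i • v i := by
        rw [← Finset.sum_neg_distrib]
        refine Finset.sum_congr rfl fun i hi => ?_
        rw [hg]
        simp only [if_neg (Finset.mem_erase.mp hi).1]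
        rw [neg_smul]
      rw [h1, h2, one_smul, hfin, add_neg_cancel]
    have := hli g hsum j hj
    rw [hg] at this
    simp at this

end Core

section Upgrade

variable {A₁ A₂ : Type*} [Ring A₁] [Ring A₂] [Algebra ℂ A₁] [Algebra ℂ A₂]
    {V : Type*} [AddCommGroup V] [Module ℂ V] [Module A₁ V] [Module A₂ V]
    [IsScalarTower ℂ A₁ V] [IsScalarTower ℂ A₂ V] [Module (A₁ ⊗[ℂ] A₂) V]

/-- A `ℂ`-submodule stable under both actions is an `A₁ ⊗ A₂`-submodule. -/
def upgrade (hcompat : ∀ (a₁ : A₁) (a₂ : A₂) (v : V), (a₁ ⊗ₜ[ℂ] a₂) • v = a₁ • a₂ • v)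
    (W₀ : Submodule ℂ V) (h₁ : ∀ (a₁ : A₁) (v : V), v ∈ W₀ → a₁ • v ∈ W₀)
    (h₂ : ∀ (a₂ : A₂) (v : V), v ∈ W₀ → a₂ • v ∈ W₀) : Submodule (A₁ ⊗[ℂ] A₂) V where
  carrier := W₀
  add_mem' := W₀.add_mem
  zero_mem' := W₀.zero_mem
  smul_mem' := by
    intro x v hv
    induction x using TensorProduct.induction_on with
    | zero => simpa using W₀.zero_mem
    | tmul a₁ a₂ => rw [hcompat]; exact h₁ a₁ _ (h₂ a₂ v hv)
    | add x y hx hy => rw [add_smul]; exact W₀.add_mem hx hy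

lemma upgrade_mem (hcompat : ∀ (a₁ : A₁) (a₂ : A₂) (v : V), (a₁ ⊗ₜ[ℂ] a₂) • v = a₁ • a₂ • v)
    (W₀ : Submodule ℂ V) (h₁ : ∀ (a₁ : A₁) (v : V), v ∈ W₀ → a₁ • v ∈ W₀)
    (h₂ : ∀ (a₂ : A₂) (v : V), v ∈ W₀ → a₂ • v ∈ W₀) (v : V) :
    v ∈ upgrade hcompat W₀ h₁ h₂ ↔ v ∈ W₀ := Iff.rfl

end Upgrade

/-- if `A₁, A₂` are unital associative `ℂ`-algebras with `A₁` of
countable dimension and `V` an irreducible `A₁ ⊗ A₂`-module (the two factors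
acting commutingly via `(a₁ ⊗ a₂) • v = a₁ • a₂ • v`), then for any irreducible
`A₁`-submodule `V₁` of `V`, the space `V₂ = Hom_{A₁}(V₁, V)` (with `A₂`-action
`(a·f)(v) = a • f v`) is an irreducible `A₂`-module and evaluation gives an
isomorphism `V₁ ⊗ V₂ ≅ V` (of `A₁ ⊗ A₂`-modules). -/
theorem stmt15 (A₁ A₂ : Type*) [Ring A₁] [Ring A₂] [Algebra ℂ A₁] [Algebra ℂ A₂]
    (V : Type*) [AddCommGroup V] [Module ℂ V]
    [Module A₁ V] [Module A₂ V]
    [IsScalarTower ℂ A₁ V] [IsScalarTower ℂ A₂ V]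
    [SMulCommClass A₁ A₂ V] [SMulCommClass A₂ A₁ V]
    [Module (A₁ ⊗[ℂ] A₂) V]
    (hcompat : ∀ (a₁ : A₁) (a₂ : A₂) (v : V), (a₁ ⊗ₜ[ℂ] a₂) • v = a₁ • a₂ • v)
    (hcount : ∃ s : Set A₁, s.Countable ∧ Submodule.span ℂ s = ⊤)
    [IsSimpleModule (A₁ ⊗[ℂ] A₂) V]
    (V₁ : Submodule A₁ V) [IsSimpleModule A₁ V₁] :
    IsSimpleModule A₂ (V₁ →ₗ[A₁] V) ∧
    ∃ φ : V₁ ⊗[ℂ] (V₁ →ₗ[A₁] V) ≃ₗ[ℂ] V,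
      (∀ (v : V₁) (f : V₁ →ₗ[A₁] V), φ (v ⊗ₜ f) = f v) ∧
      (∀ (a₁ : A₁) (a₂ : A₂) (v : V₁) (f : V₁ →ₗ[A₁] V),
        φ ((a₁ • v) ⊗ₜ (a₂ • f)) = (a₁ ⊗ₜ[ℂ] a₂) • φ (v ⊗ₜ f)) := by
  classical
  haveI : Nontrivial ↥V₁ := IsSimpleModule.nontrivial A₁ ↥V₁
  obtain ⟨v₀, hv₀⟩ := exists_ne (0 : ↥V₁)
  -- countable dimension of V₁
  obtain ⟨s, hs, hstop⟩ := hcount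
  have hrank : Module.rank ℂ ↥V₁ ≤ ℵ₀ := by
    have hspan : Submodule.span ℂ ((fun a : A₁ => a • v₀) '' s) = ⊤ := by
      rw [Submodule.eq_top_iff']
      intro m
      have hm : m ∈ Submodule.span A₁ {v₀} := by
        rw [IsSimpleModule.span_singleton_eq_top A₁ hv₀]; trivial
      obtain ⟨a, ha⟩ := Submodule.mem_span_singleton.mp hm
      have hmem : a ∈ Submodule.span ℂ s := by rw [hstop]; trivial
      have key : ∀ a' ∈ Submodule.span ℂ s,
          a' • v₀ ∈ Submodule.span ℂ ((fun a : A₁ => a • v₀) '' s) := by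
        intro a' ha'
        induction ha' using Submodule.span_induction with
        | mem x hx => exact Submodule.subset_span ⟨x, hx, rfl⟩
        | zero => rw [zero_smul]; exact Submodule.zero_mem _
        | add x y _ _ hx hy => rw [add_smul]; exact Submodule.add_mem _ hx hy
        | smul c x _ hx => rw [smul_assoc]; exact Submodule.smul_mem _ c hx
      rw [← ha]
      exact key a hmem
    calc Module.rank ℂ ↥V₁ = Module.rank ℂ ↥(⊤ : Submodule ℂ ↥V₁) := (rank_top ℂ ↥V₁).symm
      _ = Module.rank ℂ ↥(Submodule.span ℂ ((fun a : A₁ => a • v₀) '' s)) := by rw [hspan]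
      _ ≤ #((fun a : A₁ => a • v₀) '' s) := rank_span_le _
      _ ≤ ℵ₀ := mk_le_aleph0_iff.mpr (hs.image _).to_subtype
  have hEnd := dixmier (A := A₁) (M := ↥V₁) hrank
  -- the evaluation map
  set B : ↥V₁ →ₗ[ℂ] (V₁ →ₗ[A₁] V) →ₗ[ℂ] V := LinearMap.mk₂ ℂ (fun v f => f v)
    (fun m₁ m₂ f => f.map_add m₁ m₂)
    (fun c m f => by
      show f (c • m) = c • f m
      rw [← algebraMap_smul A₁ c m, f.map_smul, algebraMap_smul])
    (fun m f g => rfl)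
    (fun c m f => rfl) with hB
  set ev : ↥V₁ ⊗[ℂ] (V₁ →ₗ[A₁] V) →ₗ[ℂ] V := TensorProduct.lift B with hev
  have hev_tmul : ∀ (v : ↥V₁) (f : V₁ →ₗ[A₁] V), ev (v ⊗ₜ f) = f v := fun v f => rfl
  -- surjectivity
  have hW₁ : ∀ (a₁ : A₁) (v : V), v ∈ LinearMap.range ev → a₁ • v ∈ LinearMap.range ev := by
    rintro a₁ v ⟨x, rfl⟩
    induction x using TensorProduct.induction_on with
    | zero => rw [map_zero, smul_zero]; exact Submodule.zero_mem _
    | tmul v f =>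
      refine ⟨(a₁ • v) ⊗ₜ f, ?_⟩
      rw [hev_tmul, hev_tmul, f.map_smul]
    | add x y hx hy =>
      rw [map_add, smul_add]
      exact Submodule.add_mem _ hx hy
  have hW₂ : ∀ (a₂ : A₂) (v : V), v ∈ LinearMap.range ev → a₂ • v ∈ LinearMap.range ev := by
    rintro a₂ v ⟨x, rfl⟩
    induction x using TensorProduct.induction_on with
    | zero => rw [map_zero, smul_zero]; exact Submodule.zero_mem _
    | tmul v f =>
      refine ⟨v ⊗ₜ (a₂ • f), ?_⟩
      rw [hev_tmul, hev_tmul, LinearMap.smul_apply]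
    | add x y hx hy =>
      rw [map_add, smul_add]
      exact Submodule.add_mem _ hx hy
  have hsurj : Function.Surjective ev := by
    set W := upgrade hcompat (LinearMap.range ev) hW₁ hW₂ with hW
    have hWne : W ≠ ⊥ := by
      intro hbot
      have hmem : (v₀ : V) ∈ W := ⟨v₀ ⊗ₜ V₁.subtype, rfl⟩
      rw [hbot, Submodule.mem_bot] at hmem
      exact hv₀ (Subtype.ext hmem)
    have hWtop : W = ⊤ := (eq_bot_or_eq_top W).resolve_left hWne
    intro v
    have : v ∈ W := hWtop ▸ Submodule.mem_top
    exact this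
  -- representation by a basis
  set b : Module.Basis (Module.Basis.ofVectorSpaceIndex ℂ ↥V₁) ℂ ↥V₁ := Module.Basis.ofVectorSpace ℂ ↥V₁ with hb
  have hrep : ∀ x : ↥V₁ ⊗[ℂ] (V₁ →ₗ[A₁] V),
      ∃ (S : Finset (Module.Basis.ofVectorSpaceIndex ℂ ↥V₁)) (g : (Module.Basis.ofVectorSpaceIndex ℂ ↥V₁) → (V₁ →ₗ[A₁] V)),
        x = ∑ i ∈ S, b i ⊗ₜ g i := by
    intro x
    induction x using TensorProduct.induction_on with
    | zero => exact ⟨∅, 0, by simp⟩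
    | tmul v f =>
      refine ⟨(b.repr v).support, fun i => b.repr v i • f, ?_⟩
      have : v = ∑ i ∈ (b.repr v).support, b.repr v i • b i := by
        conv_lhs => rw [← b.linearCombination_repr v]
        rw [Finsupp.linearCombination_apply, Finsupp.sum]
      conv_lhs => rw [this]
      rw [TensorProduct.sum_tmul]
      exact Finset.sum_congr rfl fun i _ => (TensorProduct.smul_tmul _ _ _)
    | add x y hx hy =>
      obtain ⟨Sx, gx, rfl⟩ := hx
      obtain ⟨Sy, gy, rfl⟩ := hy
      refine ⟨Sx ∪ Sy, (fun i => (if i ∈ Sx then gx i else 0) + (if i ∈ Sy then gy i else 0)), ?_⟩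
      have expand : ∑ i ∈ Sx ∪ Sy,
          b i ⊗ₜ[ℂ] ((if i ∈ Sx then gx i else 0) + (if i ∈ Sy then gy i else 0))
          = (∑ i ∈ Sx ∪ Sy, b i ⊗ₜ[ℂ] (if i ∈ Sx then gx i else 0))
            + (∑ i ∈ Sx ∪ Sy, b i ⊗ₜ[ℂ] (if i ∈ Sy then gy i else 0)) := by
        rw [← Finset.sum_add_distrib]
        exact Finset.sum_congr rfl fun i _ => TensorProduct.tmul_add _ _ _
      rw [expand]
      congr 1
      · rw [← Finset.sum_subset Finset.subset_union_left
          (fun i _ hi => by rw [if_neg hi, TensorProduct.tmul_zero])]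
        exact Finset.sum_congr rfl fun i hi => by rw [if_pos hi]
      · rw [← Finset.sum_subset Finset.subset_union_right
          (fun i _ hi => by rw [if_neg hi, TensorProduct.tmul_zero])]
        exact Finset.sum_congr rfl fun i hi => by rw [if_pos hi]
  -- injectivity
  have hinj : Function.Injective ev := by
    rw [injective_iff_map_eq_zero]
    intro x hx
    obtain ⟨S, g, rfl⟩ := hrep x
    have hgz : ∀ j ∈ S, g j = 0 := by
      intro j hj
      ext w
      rw [LinearMap.zero_apply]
      have hli : ∀ gc : (Module.Basis.ofVectorSpaceIndex ℂ ↥V₁) → ℂ,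
          ∑ i ∈ S, gc i • b i = 0 → ∀ i ∈ S, gc i = 0 :=
        fun gc h i hi => linearIndependent_iff'.mp b.linearIndependent S gc h i hi
      obtain ⟨a, haj, hai⟩ := density (A := A₁) (M := ↥V₁) hEnd b S hli j hj w
      have hx' : ∑ i ∈ S, (g i) (b i) = 0 := by
        rw [map_sum] at hx
        simpa only [hev_tmul] using hx
      have : (0 : V) = ∑ i ∈ S, (g i) (a • b i) := by
        have := congrArg (fun v => a • v) hx'
        simp only [smul_zero, Finset.smul_sum] at this
        rw [← this]
        exact Finset.sum_congr rfl fun i _ => ((g i).map_smul a (b i)).symm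
      rw [Finset.sum_eq_single_of_mem j hj
        (fun i hi hij => by rw [hai i hi hij, map_zero])] at this
      rw [← haj]
      exact this.symm
    have : ∀ i ∈ S, b i ⊗ₜ[ℂ] g i = (0 : ↥V₁ ⊗[ℂ] (V₁ →ₗ[A₁] V)) :=
      fun i hi => by rw [hgz i hi, TensorProduct.tmul_zero]
    rw [Finset.sum_congr rfl this, Finset.sum_const_zero]
  -- simplicity of V₂
  have hsimple : IsSimpleModule A₂ (V₁ →ₗ[A₁] V) := by
    haveI : Nontrivial (Submodule A₂ (V₁ →ₗ[A₁] V)) := by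
      refine ⟨⊥, ⊤, fun h => ?_⟩
      have hsub : V₁.subtype ∈ (⊤ : Submodule A₂ (V₁ →ₗ[A₁] V)) := Submodule.mem_top
      rw [← h, Submodule.mem_bot] at hsub
      have := congrArg (fun f : V₁ →ₗ[A₁] V => f v₀) hsub
      simp only [Submodule.subtype_apply, LinearMap.zero_apply] at this
      exact hv₀ (Subtype.ext this)
    have hNC : ∀ (N : Submodule A₂ (V₁ →ₗ[A₁] V)) (c : ℂ) (f : V₁ →ₗ[A₁] V),
        f ∈ N → c • f ∈ N := by
      intro N c f hf
      have : c • f = (algebraMap ℂ A₂ c) • f := by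
        ext v
        rw [LinearMap.smul_apply, LinearMap.smul_apply, algebraMap_smul]
      rw [this]
      exact N.smul_mem _ hf
    refine { eq_bot_or_eq_top := fun N => ?_ }
    by_cases hN : N = ⊥
    · exact Or.inl hN
    right
    obtain ⟨f, hfN, hfne⟩ := (Submodule.ne_bot_iff N).mp hN
    -- the image of N is everything
    set G : Set V := {w | ∃ f' : V₁ →ₗ[A₁] V, f' ∈ N ∧ ∃ v : ↥V₁, f' v = w} with hG
    set W₀ : Submodule ℂ V := Submodule.span ℂ G with hW₀
    have hWa : ∀ (a₁ : A₁) (v : V), v ∈ W₀ → a₁ • v ∈ W₀ := by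
      intro a₁ v hv
      induction hv using Submodule.span_induction with
      | mem x hx =>
        obtain ⟨f', hf', v', rfl⟩ := hx
        exact Submodule.subset_span ⟨f', hf', a₁ • v', (f'.map_smul a₁ v').symm ▸ rfl⟩
      | zero => rw [smul_zero]; exact Submodule.zero_mem _
      | add x y _ _ hx hy => rw [smul_add]; exact Submodule.add_mem _ hx hy
      | smul c x _ hx => rw [smul_comm]; exact Submodule.smul_mem _ c hx
    have hWb : ∀ (a₂ : A₂) (v : V), v ∈ W₀ → a₂ • v ∈ W₀ := by
      intro a₂ v hv
      induction hv using Submodule.span_induction with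
      | mem x hx =>
        obtain ⟨f', hf', v', rfl⟩ := hx
        refine Submodule.subset_span ⟨a₂ • f', N.smul_mem a₂ hf', v', ?_⟩
        rw [LinearMap.smul_apply]
      | zero => rw [smul_zero]; exact Submodule.zero_mem _
      | add x y _ _ hx hy => rw [smul_add]; exact Submodule.add_mem _ hx hy
      | smul c x _ hx => rw [smul_comm]; exact Submodule.smul_mem _ c hx
    have hW₀top : ∀ w : V, w ∈ W₀ := by
      set W := upgrade hcompat W₀ hWa hWb with hW
      have hWne : W ≠ ⊥ := by
        intro hbot
        obtain ⟨v', hv'⟩ : ∃ v' : ↥V₁, f v' ≠ 0 := by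
          by_contra hcon
          push_neg at hcon
          exact hfne (LinearMap.ext fun v => hcon v)
        have hmem : f v' ∈ W := Submodule.subset_span ⟨f, hfN, v', rfl⟩
        rw [hbot, Submodule.mem_bot] at hmem
        exact hv' hmem
      have hWtop : W = ⊤ := (eq_bot_or_eq_top W).resolve_left hWne
      intro w
      have : w ∈ W := hWtop ▸ Submodule.mem_top
      exact this
    -- pull back along ev
    set G' : Set (↥V₁ ⊗[ℂ] (V₁ →ₗ[A₁] V)) :=
      {x | ∃ (v : ↥V₁) (f' : V₁ →ₗ[A₁] V), f' ∈ N ∧ v ⊗ₜ f' = x} with hG'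
    set P : Submodule ℂ (↥V₁ ⊗[ℂ] (V₁ →ₗ[A₁] V)) := Submodule.span ℂ G' with hP
    have hPtop : P = ⊤ := by
      apply Submodule.map_injective_of_injective hinj
      rw [Submodule.map_span]
      have himg : ev '' G' = G := by
        ext w
        constructor
        · rintro ⟨x, ⟨v, f', hf', rfl⟩, rfl⟩
          exact ⟨f', hf', v, (hev_tmul v f').symm ▸ rfl⟩
        · rintro ⟨f', hf', v, rfl⟩
          exact ⟨v ⊗ₜ f', ⟨v, f', hf', rfl⟩, hev_tmul v f'⟩
      rw [himg]
      rw [Submodule.map_top, LinearMap.range_eq_top.mpr hsurj]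
      exact Submodule.eq_top_iff'.mpr hW₀top
    -- the functional trick
    obtain ⟨lam, hlam⟩ : ∃ lam : Module.Dual ℂ ↥V₁, lam v₀ ≠ 0 := by
      by_contra hcon
      push_neg at hcon
      exact hv₀ ((Module.forall_dual_apply_eq_zero_iff ℂ v₀).mp hcon)
    set T : ↥V₁ ⊗[ℂ] (V₁ →ₗ[A₁] V) →ₗ[ℂ] (V₁ →ₗ[A₁] V) :=
      TensorProduct.lift (LinearMap.mk₂ ℂ (fun v f' => lam v • f')
        (fun m₁ m₂ f' => by
          show lam (m₁ + m₂) • f' = lam m₁ • f' + lam m₂ • f'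
          rw [map_add, add_smul])
        (fun c m f' => by
          show lam (c • m) • f' = c • (lam m • f')
          rw [map_smul, smul_eq_mul, mul_smul])
        (fun m f' g' => smul_add _ _ _)
        (fun c m f' => smul_comm _ _ _)) with hT
    have hTP : ∀ x ∈ P, T x ∈ N := by
      intro x hx
      induction hx using Submodule.span_induction with
      | mem x hx =>
        obtain ⟨v, f', hf', rfl⟩ := hx
        have : T (v ⊗ₜ f') = lam v • f' := rfl
        rw [this]
        exact hNC N _ _ hf'
      | zero => rw [map_zero]; exact N.zero_mem
      | add x y _ _ hx hy => rw [map_add]; exact N.add_mem hx hy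
      | smul c x _ hx => rw [map_smul]; exact hNC N _ _ hx
    rw [Submodule.eq_top_iff']
    intro f₂
    have hmem : v₀ ⊗ₜ[ℂ] f₂ ∈ P := hPtop ▸ Submodule.mem_top
    have hTm : lam v₀ • f₂ ∈ N := hTP _ hmem
    have := hNC N (lam v₀)⁻¹ _ hTm
    rwa [smul_smul, inv_mul_cancel₀ hlam, one_smul] at this
  refine ⟨hsimple, LinearEquiv.ofBijective ev ⟨hinj, hsurj⟩, fun v f => hev_tmul v f, ?_⟩
  intro a₁ a₂ v f
  show ev ((a₁ • v) ⊗ₜ (a₂ • f)) = (a₁ ⊗ₜ[ℂ] a₂) • ev (v ⊗ₜ f)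
  rw [hev_tmul, hev_tmul, hcompat, LinearMap.smul_apply, f.map_smul, smul_comm]
end

section
/- Let g₁, g₂ be Lie algebras over C with g₁ of countable dimension, and let V be a finite dimensional irreducible module over g₁ ⊕ g₂. Then V ≅ V₁ ⊗ V₂ where V₁ is an irreducible g₁-submodule of V and V₂ = Hom_{g₁}(V₁, V) carries the irreducible g₂-action (y·f)(v) = y·(f(v)). -/
open scoped TensorProduct

attribute [local instance 100] LieRing.ofAssociativeRing

/-- Schur's lemma. -/
lemma schur_aux {M : Type*} [AddCommGroup M] [Module ℂ M] [FiniteDimensional ℂ M] [Nontrivial M]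
    {ι : Type*} (ψ : ι → Module.End ℂ M)
    (hirr : ∀ U : Submodule ℂ M, (∀ x, ∀ v ∈ U, ψ x v ∈ U) → U = ⊥ ∨ U = ⊤)
    (σ : Module.End ℂ M) (hσ : ∀ x (v : M), σ (ψ x v) = ψ x (σ v)) :
    ∃ c : ℂ, ∀ v : M, σ v = c • v := by
  obtain ⟨c, hc⟩ := Module.End.exists_eigenvalue σ
  refine ⟨c, fun v => ?_⟩
  have hinv : ∀ x, ∀ v ∈ σ.eigenspace c, ψ x v ∈ σ.eigenspace c := by
    intro x v hv
    rw [Module.End.mem_eigenspace_iff] at hv ⊢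
    rw [hσ, hv, map_smul]
  rcases hirr _ hinv with h | h
  · exact absurd h hc
  · have : v ∈ σ.eigenspace c := h ▸ Submodule.mem_top
    exact Module.End.mem_eigenspace_iff.mp this

/-- Linear independence of intertwiners out of an irreducible module. -/
lemma inj_aux {M N : Type*} [AddCommGroup M] [Module ℂ M] [FiniteDimensional ℂ M] [Nontrivial M]
    [AddCommGroup N] [Module ℂ N]
    {ι : Type*} (ψ : ι → Module.End ℂ M) (Ψ : ι → Module.End ℂ N)
    (hirr : ∀ U : Submodule ℂ M, (∀ x, ∀ v ∈ U, ψ x v ∈ U) → U = ⊥ ∨ U = ⊤) :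
    ∀ (n : ℕ) (f : Fin n → (M →ₗ[ℂ] N)),
      (∀ i x (v : M), f i (ψ x v) = Ψ x (f i v)) → LinearIndependent ℂ f →
      ∀ v : Fin n → M, ∑ i, f i (v i) = 0 → ∀ i, v i = 0 := by
  intro n
  induction n with
  | zero => intro f _ _ v _ i; exact i.elim0
  | succ n IH =>
    intro f hequiv hli v hsum
    -- the solution space K
    set F : ((Fin (n + 1)) → M) →ₗ[ℂ] N := ∑ i, (f i) ∘ₗ (LinearMap.proj i) with hF
    have hFapp : ∀ w, F w = ∑ i, f i (w i) := by
      intro w; simp [hF, LinearMap.sum_apply]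
    set K : Submodule ℂ ((Fin (n + 1)) → M) := LinearMap.ker F with hK
    -- componentwise action
    set A : ι → Module.End ℂ ((Fin (n + 1)) → M) :=
      fun x => LinearMap.pi (fun i => (ψ x) ∘ₗ (LinearMap.proj i)) with hA
    have hAapp : ∀ x w i, A x w i = ψ x (w i) := by intro x w i; simp [hA]
    have hAK : ∀ x, ∀ w ∈ K, A x w ∈ K := by
      intro x w hw
      have : F (A x w) = Ψ x (F w) := by
        rw [hFapp, hFapp, map_sum]
        exact Finset.sum_congr rfl fun i _ => by rw [hAapp, hequiv]
      simp only [hK, LinearMap.mem_ker] at hw ⊢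
      rw [this, hw, map_zero]
    -- projection to the last coordinate
    set p : K →ₗ[ℂ] M := (LinearMap.proj (Fin.last n)) ∘ₗ K.subtype with hp
    have hpapp : ∀ k : K, p k = (k : (Fin (n + 1)) → M) (Fin.last n) := fun k => rfl
    have hliC : LinearIndependent ℂ (f ∘ Fin.castSucc) :=
      hli.comp Fin.castSucc (Fin.castSucc_injective n)
    have hkerp : LinearMap.ker p = ⊥ := by
      rw [eq_bot_iff]
      rintro ⟨k, hkK⟩ hk
      simp only [LinearMap.mem_ker, hpapp] at hk
      have hsum' : ∑ i : Fin n, (f ∘ Fin.castSucc) i (k (Fin.castSucc i)) = 0 := by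
        have := (LinearMap.mem_ker).mp hkK
        rw [hFapp] at this
        rw [Fin.sum_univ_castSucc] at this
        simpa [hk] using this
      have hz := IH (f ∘ Fin.castSucc) (fun i x v => hequiv _ x v) hliC
        (fun i => k (Fin.castSucc i)) hsum'
      have hk0 : ∀ j, k j = 0 := fun j => Fin.lastCases hk (fun i => hz i) j
      have : k = 0 := funext hk0
      simp [this]
    -- range p is invariant
    have hrange : ∀ x, ∀ m ∈ LinearMap.range p, ψ x m ∈ LinearMap.range p := by
      rintro x m ⟨k, rfl⟩
      exact ⟨⟨A x k, hAK x _ k.2⟩, by rw [hpapp, hpapp]; exact hAapp x k _⟩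
    rcases hirr _ hrange with hbot | htop
    · -- p vanishes identically; then v ∈ ker p = ⊥
      have hvK : v ∈ K := by rw [hK, LinearMap.mem_ker, hFapp]; exact hsum
      have hmem : (⟨v, hvK⟩ : K) ∈ LinearMap.ker p := by
        rw [LinearMap.mem_ker]
        have h2 := LinearMap.mem_range_self p ⟨v, hvK⟩
        rw [hbot] at h2
        simpa using h2
      rw [hkerp] at hmem
      have hv0 : v = 0 := by simpa using hmem
      intro i
      rw [hv0]; rfl
    · exfalso
      have hbij : Function.Bijective p :=
        ⟨LinearMap.ker_eq_bot.mp hkerp, LinearMap.range_eq_top.mp htop⟩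
      set e := LinearEquiv.ofBijective p hbij with he
      have hpe : ∀ k : K, p k = e k := fun k => rfl
      have hlast : ∀ m : M, (e.symm m).1 (Fin.last n) = m := by
        intro m
        have : p (e.symm m) = m := by rw [hpe, e.apply_symm_apply]
        exact this
      have hesymm : ∀ x m, (e.symm (ψ x m)).1 = A x (e.symm m).1 := by
        intro x m
        have h1 : (⟨A x (e.symm m).1, hAK x _ (e.symm m).2⟩ : K) = e.symm (ψ x m) := by
          apply e.injective
          rw [e.apply_symm_apply, ← hpe, hpapp]
          show (A x (e.symm m).1) (Fin.last n) = ψ x m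
          rw [hAapp, hlast]
        rw [← h1]
    -- Schur scalars
      have hschur : ∀ i : Fin n, ∃ cc : ℂ, ∀ m : M, (e.symm m).1 (Fin.castSucc i) = cc • m := by
        intro i
        set σ : Module.End ℂ M :=
          ((LinearMap.proj (Fin.castSucc i)) ∘ₗ K.subtype) ∘ₗ (e.symm : M →ₗ[ℂ] K) with hσdef
        have hcomm : ∀ x (m : M), σ (ψ x m) = ψ x (σ m) := by
          intro x m
          show (e.symm (ψ x m)).1 (Fin.castSucc i) = ψ x ((e.symm m).1 (Fin.castSucc i))
          rw [hesymm, hAapp]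
        obtain ⟨cc, hcc⟩ := schur_aux ψ hirr σ hcomm
        exact ⟨cc, fun m => hcc m⟩
      choose c hc using hschur
      have hdep : ∀ m : M, (∑ i : Fin n, c i • (f (Fin.castSucc i)) m) + f (Fin.last n) m = 0 := by
        intro m
        have hkK : ∑ i, f i ((e.symm m).1 i) = 0 := by
          rw [← hFapp]; exact LinearMap.mem_ker.mp (e.symm m).2
        rw [Fin.sum_univ_castSucc] at hkK
        rw [hlast] at hkK
        calc (∑ i : Fin n, c i • (f (Fin.castSucc i)) m) + f (Fin.last n) m
            = (∑ i : Fin n, f (Fin.castSucc i) ((e.symm m).1 (Fin.castSucc i)))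
                + f (Fin.last n) m := by
              congr 1
              exact Finset.sum_congr rfl fun i _ => by rw [hc i m, map_smul]
          _ = 0 := hkK
      have hzero : ∑ i, (Fin.snoc c (1 : ℂ) : Fin (n + 1) → ℂ) i • f i = 0 := by
        ext m
        rw [Fin.sum_univ_castSucc]
        simp only [Fin.snoc_castSucc, Fin.snoc_last, one_smul, LinearMap.add_apply,
          LinearMap.sum_apply, LinearMap.smul_apply, LinearMap.zero_apply]
        exact hdep m
      have h1 := Fintype.linearIndependent_iff.mp hli _ hzero (Fin.last n)
      simp at h1

/-- The submodule of `g₁`-equivariant maps `V₁ → V`. -/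
def equivHom {ι V : Type*} [AddCommGroup V] [Module ℂ V] (φ : ι → Module.End ℂ V)
    (V₁ : Submodule ℂ V) (hinv : ∀ x : ι, ∀ v ∈ V₁, φ x v ∈ V₁) :
    Submodule ℂ (V₁ →ₗ[ℂ] V) where
  carrier := {f | ∀ (x : ι) (v : V₁), f ⟨φ x ↑v, hinv x ↑v v.2⟩ = φ x (f v)}
  add_mem' := by intro f g hf hg x v; simp [hf x v, hg x v]
  zero_mem' := by intro x v; simp
  smul_mem' := by intro c f hf x v; simp [hf x v]


set_option maxHeartbeats 1000000 in
/-- let `g₁, g₂` be Lie algebras over `ℂ` with `g₁` of countable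
dimension, acting commutingly on a finite dimensional space `V` via `φ₁, φ₂`
(this is the action of `g₁ ⊕ g₂`), with `V` irreducible for the joint action.
If `V₁` is an irreducible `g₁`-submodule of `V`, then
`V₂ = Hom_{g₁}(V₁, V)` is stable under the `g₂`-action `(y·f)(v) = y·(f v)`,
is irreducible for it, and evaluation `v ⊗ f ↦ f v` is an isomorphism
`V₁ ⊗ V₂ ≅ V`. -/
theorem stmt16 {g₁ g₂ : Type*} [LieRing g₁] [LieAlgebra ℂ g₁]
    [LieRing g₂] [LieAlgebra ℂ g₂]
    (V : Type*) [AddCommGroup V] [Module ℂ V] [FiniteDimensional ℂ V]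
    (φ₁ : g₁ →ₗ⁅ℂ⁆ Module.End ℂ V) (φ₂ : g₂ →ₗ⁅ℂ⁆ Module.End ℂ V)
    (hcomm : ∀ (x : g₁) (y : g₂), Commute (φ₁ x) (φ₂ y))
    (hcount : ∃ s : Set g₁, s.Countable ∧ Submodule.span ℂ s = ⊤)
    [Nontrivial V]
    (hirr : ∀ W : Submodule ℂ V, (∀ x, ∀ v ∈ W, φ₁ x v ∈ W) →
      (∀ y, ∀ v ∈ W, φ₂ y v ∈ W) → W = ⊥ ∨ W = ⊤)
    (V₁ : Submodule ℂ V)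
    (hinv : ∀ x : g₁, ∀ v ∈ V₁, φ₁ x v ∈ V₁)
    (hV₁ne : V₁ ≠ ⊥)
    (hV₁irr : ∀ W ≤ V₁, (∀ x, ∀ v ∈ W, φ₁ x v ∈ W) → W = ⊥ ∨ W = V₁) :
    ∃ V₂ : Submodule ℂ (V₁ →ₗ[ℂ] V),
      (V₂ : Set (V₁ →ₗ[ℂ] V))
        = {f | ∀ (x : g₁) (v : V₁), f ⟨φ₁ x ↑v, hinv x ↑v v.2⟩ = φ₁ x (f v)} ∧
      (∀ y : g₂, ∀ f ∈ V₂, (φ₂ y) ∘ₗ f ∈ V₂) ∧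
      V₂ ≠ ⊥ ∧
      (∀ W ≤ V₂, (∀ y : g₂, ∀ f ∈ W, (φ₂ y) ∘ₗ f ∈ W) → W = ⊥ ∨ W = V₂) ∧
      ∃ e : V₁ ⊗[ℂ] V₂ ≃ₗ[ℂ] V,
        ∀ (v : V₁) (f : V₂), e (v ⊗ₜ f) = (f : V₁ →ₗ[ℂ] V) v := by
  classical
  set V₂ : Submodule ℂ (V₁ →ₗ[ℂ] V) := equivHom (fun x => φ₁ x) V₁ hinv with hV₂
  have hmem : ∀ f : V₁ →ₗ[ℂ] V, f ∈ V₂ ↔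
      ∀ (x : g₁) (v : V₁), f ⟨φ₁ x ↑v, hinv x ↑v v.2⟩ = φ₁ x (f v) := fun f => Iff.rfl
  -- the restricted action on V₁
  set ψ : g₁ → Module.End ℂ V₁ := fun x => (φ₁ x).restrict (hinv x) with hψ
  have hψapp : ∀ x (v : V₁), (ψ x v : V) = φ₁ x ↑v := fun x v => rfl
  have hψapp' : ∀ x (v : V₁), ψ x v = ⟨φ₁ x ↑v, hinv x ↑v v.2⟩ := fun x v => rfl
  -- irreducibility of V₁ as a module over itself
  have hirr₁ : ∀ U : Submodule ℂ V₁, (∀ x, ∀ v ∈ U, ψ x v ∈ U) → U = ⊥ ∨ U = ⊤ := by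
    intro U hU
    have hle : U.map V₁.subtype ≤ V₁ := by
      rintro _ ⟨u, hu, rfl⟩; exact (u : V₁).2
    have hUinv : ∀ x, ∀ v ∈ U.map V₁.subtype, φ₁ x v ∈ U.map V₁.subtype := by
      rintro x _ ⟨u, hu, rfl⟩
      exact ⟨ψ x u, hU x u hu, rfl⟩
    rcases hV₁irr _ hle hUinv with h | h
    · left
      refine Submodule.map_injective_of_injective V₁.injective_subtype ?_
      rw [h, Submodule.map_bot]
    · right
      refine Submodule.map_injective_of_injective V₁.injective_subtype ?_
      rw [Submodule.map_top, Submodule.range_subtype]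
      exact h
  have hV₁nt : Nontrivial V₁ := Submodule.nontrivial_iff_ne_bot.mpr hV₁ne
  -- the inclusion is a nonzero element of V₂
  have hιmem : V₁.subtype ∈ V₂ := fun x v => rfl
  obtain ⟨v₀, hv₀V₁, hv₀⟩ := Submodule.exists_mem_ne_zero_of_ne_bot hV₁ne
  have hιne : V₁.subtype ≠ 0 := by
    intro h
    exact hv₀ (by simpa using LinearMap.congr_fun h ⟨v₀, hv₀V₁⟩)
  have hV₂ne : V₂ ≠ ⊥ := by
    intro h
    exact hιne (by simpa [h] using hιmem)
  -- stability of V₂ under g₂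
  have hstab : ∀ y : g₂, ∀ f ∈ V₂, (φ₂ y) ∘ₗ f ∈ V₂ := by
    intro y f hf x v
    simp only [LinearMap.comp_apply]
    rw [hf x v, ← LinearMap.comp_apply (φ₂ y), ← Module.End.mul_eq_comp, (hcomm x y).symm.eq,
      Module.End.mul_eq_comp, LinearMap.comp_apply]
  -- surjectivity of evaluation maps
  have hsurj : ∀ W : Submodule ℂ (V₁ →ₗ[ℂ] V), W ≤ V₂ →
      (∀ y : g₂, ∀ f ∈ W, (φ₂ y) ∘ₗ f ∈ W) → W ≠ ⊥ →
      Function.Surjective (TensorProduct.lift (W.subtype).flip) := by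
    intro W hWle hWstab hWne
    set evW := TensorProduct.lift (W.subtype).flip with hevW
    have hevWtmul : ∀ (v : V₁) (f : W), evW (v ⊗ₜ f) = (f : V₁ →ₗ[ℂ] V) v := fun v f => rfl
    rw [← LinearMap.range_eq_top]
    have h1 : ∀ x : g₁, ∀ w ∈ LinearMap.range evW, φ₁ x w ∈ LinearMap.range evW := by
      rintro x _ ⟨t, rfl⟩
      induction t using TensorProduct.induction_on with
      | zero => simp
      | tmul v f =>
        refine ⟨(⟨φ₁ x ↑v, hinv x ↑v v.2⟩ : V₁) ⊗ₜ f, ?_⟩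
        rw [hevWtmul, hevWtmul]
        exact (hWle f.2 x v)
      | add t₁ t₂ h₁ h₂ =>
        rw [map_add, map_add]
        exact Submodule.add_mem _ h₁ h₂
    have h2 : ∀ y : g₂, ∀ w ∈ LinearMap.range evW, φ₂ y w ∈ LinearMap.range evW := by
      rintro y _ ⟨t, rfl⟩
      induction t using TensorProduct.induction_on with
      | zero => simp
      | tmul v f =>
        exact ⟨v ⊗ₜ ⟨(φ₂ y) ∘ₗ f, hWstab y f f.2⟩, rfl⟩
      | add t₁ t₂ h₁ h₂ =>
        rw [map_add, map_add]
        exact Submodule.add_mem _ h₁ h₂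
    rcases hirr _ h1 h2 with h | h
    · exfalso
      obtain ⟨f, hfW, hfne⟩ := Submodule.exists_mem_ne_zero_of_ne_bot hWne
      obtain ⟨v, hv⟩ : ∃ v : V₁, f v ≠ 0 := by
        by_contra hall
        push_neg at hall
        exact hfne (LinearMap.ext fun v => by simpa using hall v)
      have : f v ∈ LinearMap.range evW := ⟨v ⊗ₜ ⟨f, hfW⟩, rfl⟩
      rw [h] at this
      exact hv (by simpa using this)
    · exact h
  -- evaluation for V₂ itself
  set ev := TensorProduct.lift ((V₂.subtype).flip) with hev
  have hevtmul : ∀ (v : V₁) (f : V₂), ev (v ⊗ₜ f) = (f : V₁ →ₗ[ℂ] V) v := fun v f => rfl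
  have hevsurj : Function.Surjective ev := hsurj V₂ le_rfl hstab hV₂ne
  -- injectivity of ev
  have hevker : LinearMap.ker ev = ⊥ := by
    rw [eq_bot_iff]
    set n := Module.finrank ℂ V₂ with hn
    set b := Module.finBasis ℂ V₂ with hb
    set Φ : (Fin n → V₁) →ₗ[ℂ] (V₁ ⊗[ℂ] V₂) :=
      LinearMap.lsum ℂ (fun _ : Fin n => V₁) ℂ
        (fun i => (TensorProduct.mk ℂ V₁ V₂).flip (b i)) with hΦ
    have hΦapp : ∀ w : Fin n → V₁, Φ w = ∑ i, (w i) ⊗ₜ (b i) := by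
      intro w
      simp [hΦ, LinearMap.lsum_apply, TensorProduct.mk_apply]
    have hΦsurj : Function.Surjective Φ := by
      rw [← LinearMap.range_eq_top, eq_top_iff]
      rintro t -
      induction t using TensorProduct.induction_on with
      | zero => simp
      | tmul v f =>
        refine ⟨fun i => b.repr f i • v, ?_⟩
        rw [hΦapp]
        conv_rhs => rw [← Module.Basis.sum_repr b f]
        rw [TensorProduct.tmul_sum]
        exact Finset.sum_congr rfl fun i _ => by
          rw [TensorProduct.tmul_smul, TensorProduct.smul_tmul']
      | add t₁ t₂ h₁ h₂ =>
        obtain ⟨w₁, hw₁⟩ := h₁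
        obtain ⟨w₂, hw₂⟩ := h₂
        exact ⟨w₁ + w₂, by rw [map_add, hw₁, hw₂]⟩
    intro t ht
    obtain ⟨w, rfl⟩ := hΦsurj t
    have hli : LinearIndependent ℂ (fun i => ((b i : V₂) : V₁ →ₗ[ℂ] V)) :=
      b.linearIndependent.map' V₂.subtype (Submodule.ker_subtype V₂)
    have hzero : ∑ i, ((b i : V₂) : V₁ →ₗ[ℂ] V) (w i) = 0 := by
      have := LinearMap.mem_ker.mp ht
      rw [hΦapp, map_sum] at this
      simpa [hevtmul] using this
    have hw0 := inj_aux ψ (fun x => φ₁ x) hirr₁ n (fun i => ((b i : V₂) : V₁ →ₗ[ℂ] V))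
      (fun i x v => by rw [hψapp']; exact (b i).2 x v) hli w hzero
    have : w = 0 := funext hw0
    rw [this, map_zero]
    exact Submodule.zero_mem ⊥
  have hevinj : Function.Injective ev := LinearMap.ker_eq_bot.mp hevker
  -- irreducibility of V₂ under g₂
  have hV₂irr : ∀ W ≤ V₂, (∀ y : g₂, ∀ f ∈ W, (φ₂ y) ∘ₗ f ∈ W) → W = ⊥ ∨ W = V₂ := by
    intro W hWle hWstab
    by_cases hW : W = ⊥
    · exact Or.inl hW
    · right
      have hWsurj := hsurj W hWle hWstab hW
      have hfr1 : Module.finrank ℂ V ≤ Module.finrank ℂ (V₁ ⊗[ℂ] W) := by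
        have h := LinearMap.finrank_range_le (R := ℂ) (M := V₁ ⊗[ℂ] W)
          (TensorProduct.lift (W.subtype).flip)
        rwa [LinearMap.range_eq_top.mpr hWsurj, finrank_top] at h
      have hfr2 : Module.finrank ℂ (V₁ ⊗[ℂ] V₂) ≤ Module.finrank ℂ V :=
        LinearMap.finrank_le_finrank_of_injective (M := V₁ ⊗[ℂ] V₂) (f := ev) hevinj
      rw [Module.finrank_tensorProduct] at hfr1 hfr2
      have hpos : 0 < Module.finrank ℂ V₁ := Module.finrank_pos
      have : Module.finrank ℂ V₂ ≤ Module.finrank ℂ W :=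
        Nat.le_of_mul_le_mul_left (le_trans hfr2 hfr1) hpos
      exact Submodule.eq_of_le_of_finrank_le hWle this
  exact ⟨V₂, rfl, hstab, hV₂ne, hV₂irr, LinearEquiv.ofBijective ev ⟨hevinj, hevsurj⟩,
    fun v f => hevtmul v f⟩
end

section
/- In the tensor field module F^α(V,W) over D ⋉ Z (Z the center of C_Q acting by t^n·(v⊗w⊗t^s) = v⊗w⊗t^{n+s} for n ∈ R), if V is an irreducible gl_d-module and W an irreducible Γ-graded gl_N-module, then F^α(V,W) is an irreducible (D ⋉ Z)-module with all weight spaces (for the Cartan span{D(u,0)}) of dimension at most dim V · dim W, i.e. it is a cuspidal module. -/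
open Matrix
open scoped TensorProduct

attribute [local instance 100] LieRing.ofAssociativeRing

noncomputable def qsigma {d : ℕ} (q : Fin d → Fin d → ℂ) (m n : Fin d → ℤ) : ℂ :=
  ∏ j : Fin d, ∏ i : Fin d, if i < j then q j i ^ (n j * m i) else 1

def radSet {d : ℕ} (q : Fin d → Fin d → ℂ) : Set (Fin d → ℤ) :=
  {m | ∀ n, qsigma q m n = qsigma q n m}

noncomputable def Xdiag (k : ℕ) (q : ℂ) : Matrix (Fin k) (Fin k) ℂ :=
  Matrix.diagonal fun a => q ^ (a : ℕ)

def Yshift (k : ℕ) : Matrix (Fin k) (Fin k) ℂ :=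
  Matrix.of fun a b => if (b : ℕ) = ((a : ℕ) + 1) % k then 1 else 0

noncomputable def zpowM {n : Type*} [Fintype n] [DecidableEq n]
    (M : Matrix n n ℂ) (ord : ℕ) (e : ℤ) : Matrix n n ℂ :=
  M ^ (e % (ord : ℤ)).toNat

/-- The matrix `X^n = ⊗ᵢ X_{2i-1}^{n_{2i-1}} X_{2i}^{n_{2i}} ∈ M_N(ℂ)`. -/
noncomputable def Xbig {d z : ℕ} (k : Fin z → ℕ) (qi : Fin z → ℂ)
    (e₀ e₁ : Fin z → Fin d) (n : Fin d → ℤ) :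
    Matrix (Π i, Fin (k i)) (Π i, Fin (k i)) ℂ :=
  Matrix.of fun a b => ∏ i : Fin z,
    (zpowM (Xdiag (k i) (qi i)) (k i) (n (e₀ i))
      * zpowM (Yshift (k i)) (k i) (n (e₁ i))) (a i) (b i)



open Module
open scoped TensorProduct

theorem exists_dual_one {V : Type*} [AddCommGroup V] [Module ℂ V] {v : V} (hv : v ≠ 0) :
    ∃ φ : V →ₗ[ℂ] ℂ, φ v = 1 := by
  have h := (Module.forall_dual_apply_eq_zero_iff ℂ v).not.mpr hv
  push_neg at h
  obtain ⟨φ, hφ⟩ := h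
  exact ⟨(φ v)⁻¹ • φ, by simp [LinearMap.smul_apply, inv_mul_cancel₀ hφ]⟩

theorem my_tmul_ne_zero {V W : Type*} [AddCommGroup V] [Module ℂ V]
    [AddCommGroup W] [Module ℂ W] {v : V} {w : W} (hv : v ≠ 0) (hw : w ≠ 0) :
    v ⊗ₜ[ℂ] w ≠ 0 := by
  obtain ⟨φ, hφ⟩ := exists_dual_one hv
  obtain ⟨ψ, hψ⟩ := exists_dual_one hw
  intro h
  have := congrArg ((TensorProduct.lid ℂ ℂ).toLinearMap ∘ₗ TensorProduct.map φ ψ) h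
  simp [hφ, hψ] at this

theorem my_burnside {V : Type*} [AddCommGroup V] [Module ℂ V] [FiniteDimensional ℂ V]
    [Nontrivial V] (A : Subalgebra ℂ (Module.End ℂ V))
    (hirr : ∀ U : Submodule ℂ V, (∀ a ∈ A, ∀ v ∈ U, a v ∈ U) → U = ⊥ ∨ U = ⊤) :
    A = ⊤ := by
  classical
  -- transitivity
  have htrans : ∀ v : V, v ≠ 0 → ∀ x : V, ∃ a ∈ A, a v = x := by
    intro v hv x
    let Av : Submodule ℂ V :=
      { carrier := {x | ∃ a ∈ A, a v = x}
        add_mem' := by rintro _ _ ⟨a, ha, rfl⟩ ⟨b, hb, rfl⟩; exact ⟨a + b, A.add_mem ha hb, rfl⟩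
        zero_mem' := ⟨0, A.zero_mem, rfl⟩
        smul_mem' := by rintro c _ ⟨a, ha, rfl⟩; exact ⟨c • a, A.smul_mem ha c, rfl⟩ }
    have hAv : Av = ⊥ ∨ Av = ⊤ := by
      apply hirr
      rintro a ha _ ⟨b, hb, rfl⟩
      exact ⟨a * b, A.mul_mem ha hb, rfl⟩
    have hvAv : v ∈ Av := ⟨1, A.one_mem, rfl⟩
    rcases hAv with h | h
    · rw [h] at hvAv; exact absurd hvAv (by simpa using hv)
    · have : x ∈ Av := h ▸ Submodule.mem_top
      exact this
  have hone : (1 : Module.End ℂ V) ≠ 0 := by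
    obtain ⟨v, hv⟩ := exists_ne (0 : V)
    intro h
    exact hv (by simpa using congrFun (congrArg DFunLike.coe h) v)
  -- minimal rank element
  let S : Set ℕ := {r | ∃ E, E ∈ A ∧ E ≠ 0 ∧ finrank ℂ (LinearMap.range E) = r}
  have hSne : S.Nonempty := ⟨_, 1, A.one_mem, hone, rfl⟩
  obtain ⟨E, hEA, hE0, hErk⟩ : ∃ E, E ∈ A ∧ E ≠ 0 ∧ finrank ℂ (LinearMap.range E) = sInf S :=
    Nat.sInf_mem hSne
  have hmin : ∀ F, F ∈ A → F ≠ 0 → sInf S ≤ finrank ℂ (LinearMap.range F) :=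
    fun F hFA hF0 => Nat.sInf_le ⟨F, hFA, hF0, rfl⟩
  -- E F E = μ E
  have hKne : LinearMap.range E ≠ ⊥ := by
    simpa [LinearMap.range_eq_bot] using hE0
  haveI : Nontrivial (LinearMap.range E) := Submodule.nontrivial_iff_ne_bot.mpr hKne
  have step3 : ∀ F ∈ A, ∃ μ : ℂ, E * F * E = μ • E := by
    intro F hF
    have hmaps : ∀ x ∈ LinearMap.range E, (E * F) x ∈ LinearMap.range E := by
      intro x _; exact ⟨F x, rfl⟩
    let g : Module.End ℂ (LinearMap.range E) := (E * F).restrict hmaps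
    obtain ⟨μ, hμ⟩ := Module.End.exists_eigenvalue g
    obtain ⟨xh, hxh⟩ := hμ.exists_hasEigenvector
    refine ⟨μ, ?_⟩
    by_contra hD
    have hDA : E * F * E - μ • E ∈ A :=
      A.sub_mem (A.mul_mem (A.mul_mem hEA hF) hEA) (A.smul_mem hEA μ)
    have hD0 : E * F * E - μ • E ≠ 0 := sub_ne_zero.mpr hD
    -- rank bound
    let φ : (LinearMap.range E) →ₗ[ℂ] V := (E * F - μ • 1).domRestrict (LinearMap.range E)
    have hφxh : φ xh = 0 := by
      have h1 : (E * F) (xh : V) = μ • (xh : V) := by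
        have := hxh.apply_eq_smul
        have := congrArg Subtype.val this
        simpa [g, LinearMap.restrict_apply] using this
      simp [φ, LinearMap.domRestrict_apply, LinearMap.sub_apply, h1]
    have hkerφ : LinearMap.ker φ ≠ ⊥ := by
      intro h
      have : xh = 0 := by
        have : xh ∈ LinearMap.ker φ := hφxh
        rwa [h, Submodule.mem_bot] at this
      exact hxh.right this
    have hrange : LinearMap.range (E * F * E - μ • E) = LinearMap.range φ := by
      rw [LinearMap.range_domRestrict]
      have : E * F * E - μ • E = (E * F - μ • 1) * E := by rw [sub_mul, smul_mul_assoc, one_mul]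
      rw [this, Module.End.mul_eq_comp, LinearMap.range_comp]
    have hlt : finrank ℂ (LinearMap.range φ) < sInf S := by
      have hrn := LinearMap.finrank_range_add_finrank_ker φ
      have hker : 0 < finrank ℂ (LinearMap.ker φ) := by
        rw [Module.finrank_pos_iff]
        exact Submodule.nontrivial_iff_ne_bot.mpr hkerφ
      omega
    have := hmin _ hDA hD0
    rw [hrange] at this
    omega
  -- rank one
  obtain ⟨u, hu⟩ : ∃ u, E u ≠ 0 := by
    by_contra h
    push_neg at h
    exact hE0 (LinearMap.ext fun x => h x)
  set v₀ := E u with hv₀def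
  have hv₀ : v₀ ≠ 0 := hu
  have hEc : ∀ x : V, ∃ c : ℂ, E x = c • v₀ := by
    intro x
    obtain ⟨F, hFA, hFv₀⟩ := htrans v₀ hv₀ x
    obtain ⟨μ, hμ⟩ := step3 F hFA
    refine ⟨μ, ?_⟩
    have hc := congrFun (congrArg DFunLike.coe hμ) u
    simp only [Module.End.mul_apply, LinearMap.smul_apply] at hc
    rw [← hv₀def] at hc
    rw [hFv₀] at hc
    exact hc
  obtain ⟨ξ, hξ⟩ := exists_dual_one hv₀
  set φ₀ : V →ₗ[ℂ] ℂ := ξ ∘ₗ E with hφ₀def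
  have hE : ∀ x, E x = φ₀ x • v₀ := by
    intro x
    obtain ⟨c, hc⟩ := hEc x
    rw [hφ₀def]
    simp only [LinearMap.comp_apply, hc, _root_.map_smul, hξ, smul_eq_mul, mul_one]
  have hφ₀ : φ₀ ≠ 0 := by
    intro h
    apply hu
    rw [hv₀def, hE u, h]
    simp
  -- the functional span
  let L : Module.End ℂ V →ₗ[ℂ] Module.Dual ℂ V := LinearMap.llcomp ℂ V V ℂ φ₀
  let Φ : Submodule ℂ (Module.Dual ℂ V) := (Subalgebra.toSubmodule A).map L
  have hΦmem : ∀ G ∈ A, φ₀ ∘ₗ G ∈ Φ := fun G hG => ⟨G, hG, rfl⟩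
  have hΦtop : Φ = ⊤ := by
    have hK0 : Φ.dualCoannihilator = ⊥ ∨ Φ.dualCoannihilator = ⊤ := by
      apply hirr
      intro a ha x hx
      rw [Submodule.mem_dualCoannihilator] at hx ⊢
      rintro f ⟨G, hG, rfl⟩
      have : L (G * a) ∈ Φ := ⟨G * a, A.mul_mem hG ha, rfl⟩
      have h2 := hx _ this
      simpa [L, LinearMap.llcomp_apply] using h2
    have hK0ne : Φ.dualCoannihilator ≠ ⊤ := by
      intro h
      obtain ⟨x, hx⟩ : ∃ x, φ₀ x ≠ 0 := by
        by_contra hc; push_neg at hc; exact hφ₀ (LinearMap.ext hc)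
      have : x ∈ Φ.dualCoannihilator := h ▸ Submodule.mem_top
      rw [Submodule.mem_dualCoannihilator] at this
      exact hx (this φ₀ (by simpa [Module.End.one_eq_id] using hΦmem 1 A.one_mem))
    have hK0bot : Φ.dualCoannihilator = ⊥ := hK0.resolve_right hK0ne
    have hfr := Subspace.finrank_add_finrank_dualCoannihilator_eq Φ
    rw [hK0bot, finrank_bot] at hfr
    apply Submodule.eq_top_of_finrank_eq
    rw [Subspace.dual_finrank_eq]
    omega
  -- rank ones are in A
  have hrank1 : ∀ (ψ : Module.Dual ℂ V) (w : V), ψ.smulRight w ∈ A := by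
    intro ψ w
    let Lw : Module.Dual ℂ V →ₗ[ℂ] Module.End ℂ V :=
      { toFun := fun ψ => ψ.smulRight w
        map_add' := by intro a b; ext x; simp [LinearMap.smulRight_apply, add_smul]
        map_smul' := by intro c a; ext x; simp [LinearMap.smulRight_apply, smul_smul] }
    let Sw : Submodule ℂ (Module.Dual ℂ V) := Submodule.comap Lw (Subalgebra.toSubmodule A)
    have hΦSw : Φ ≤ Sw := by
      rintro _ ⟨G, hG, rfl⟩
      obtain ⟨F, hFA, hFv₀⟩ := htrans v₀ hv₀ w
      have heq : Lw (L G) = F * E * G := by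
        ext x
        simp only [Lw, L, LinearMap.coe_mk, AddHom.coe_mk, LinearMap.smulRight_apply,
          LinearMap.llcomp_apply, Module.End.mul_apply, LinearMap.comp_apply]
        rw [hE (G x), _root_.map_smul, hFv₀]
      show Lw (L G) ∈ Subalgebra.toSubmodule A
      rw [heq]
      exact A.mul_mem (A.mul_mem hFA hEA) hG
    exact hΦSw (hΦtop ▸ Submodule.mem_top)
  -- conclude
  rw [eq_top_iff]
  intro T _
  let b := Module.finBasis ℂ V
  have hT : T = ∑ i, (b.coord i).smulRight (T (b i)) := by
    ext x
    rw [LinearMap.sum_apply]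
    simp only [LinearMap.smulRight_apply, Basis.coord_apply]
    conv_lhs => rw [← b.sum_repr x]
    rw [map_sum]
    simp [_root_.map_smul]
  rw [hT]
  exact A.toSubmodule.sum_mem fun i _ => hrank1 _ _

open Module
open scoped TensorProduct


theorem extraction {V W : Type*} [AddCommGroup V] [Module ℂ V] [FiniteDimensional ℂ V]
    [AddCommGroup W] [Module ℂ W]
    (T : Submodule ℂ (V ⊗[ℂ] W))
    (hT : ∀ E : Module.End ℂ V, ∀ y ∈ T, TensorProduct.map E LinearMap.id y ∈ T)
    (v₁ : V) (hv₁ : v₁ ≠ 0) :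
    T = Submodule.span ℂ {x | ∃ v w, v₁ ⊗ₜ[ℂ] w ∈ T ∧ x = v ⊗ₜ[ℂ] w} := by
  classical
  obtain ⟨φ, hφ⟩ := exists_dual_one hv₁
  apply le_antisymm
  · -- T ≤ span
    intro y hy
    let b := Module.finBasis ℂ V
    let κ : Fin (finrank ℂ V) → (V ⊗[ℂ] W →ₗ[ℂ] W) := fun i =>
      (TensorProduct.lid ℂ W).toLinearMap ∘ₗ TensorProduct.map (b.coord i) LinearMap.id
    have claim1 : ∀ i, TensorProduct.map ((b.coord i).smulRight v₁) LinearMap.id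
        = (TensorProduct.mk ℂ V W v₁) ∘ₗ κ i := by
      intro i
      apply TensorProduct.ext'
      intro v w
      simp only [TensorProduct.map_tmul, LinearMap.smulRight_apply, LinearMap.id_coe, id_eq,
        LinearMap.comp_apply, κ, LinearEquiv.coe_coe, TensorProduct.lid_tmul,
        TensorProduct.mk_apply]
      rw [TensorProduct.smul_tmul, TensorProduct.tmul_smul]
    have hκY : ∀ i, v₁ ⊗ₜ[ℂ] (κ i y) ∈ T := by
      intro i
      have := hT ((b.coord i).smulRight v₁) y hy
      rw [claim1 i] at this
      exact this
    have claim2 : y = ∑ i, (b i) ⊗ₜ[ℂ] (κ i y) := by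
      have hL : (∑ i, (TensorProduct.mk ℂ V W (b i)) ∘ₗ κ i) = LinearMap.id := by
        apply TensorProduct.ext'
        intro v w
        simp only [LinearMap.sum_apply, LinearMap.comp_apply, κ, LinearEquiv.coe_coe,
          TensorProduct.map_tmul, TensorProduct.lid_tmul, TensorProduct.mk_apply,
          LinearMap.id_coe, id_eq, Basis.coord_apply]
        have : ∀ i : Fin (finrank ℂ V), b i ⊗ₜ[ℂ] ((b.repr v) i • w)
            = ((b.repr v) i • b i) ⊗ₜ[ℂ] w := by
          intro i
          rw [TensorProduct.smul_tmul]
        rw [Finset.sum_congr rfl fun i _ => this i, ← TensorProduct.sum_tmul, b.sum_repr]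
      have := congrFun (congrArg DFunLike.coe hL) y
      simp only [LinearMap.sum_apply, LinearMap.comp_apply, LinearMap.id_coe, id_eq,
        TensorProduct.mk_apply] at this
      exact this.symm
    rw [claim2]
    exact Submodule.sum_mem _ fun i _ => Submodule.subset_span ⟨b i, κ i y, hκY i, rfl⟩
  · rw [Submodule.span_le]
    rintro _ ⟨v, w, hw, rfl⟩
    have := hT (φ.smulRight v) _ hw
    simpa [TensorProduct.map_tmul, hφ] using this

section rad
variable {d z : ℕ} {k : Fin z → ℕ} {qi : Fin z → ℂ} {e₀ e₁ : Fin z → Fin d}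
  {q : Fin d → Fin d → ℂ}

theorem zpow_key {x : ℂ} {kk : ℕ} (h1 : x ^ kk = 1) {b : ℤ} (hb : (kk : ℤ) ∣ b) (a : ℤ) :
    x ^ (a * b) = 1 := by
  obtain ⟨c, rfl⟩ := hb
  have he : a * ((kk : ℤ) * c) = (kk : ℤ) * (a * c) := by ring
  rw [he, _root_.zpow_mul, zpow_natCast, h1, _root_.one_zpow]

variable
  (he₀ : ∀ i, (e₀ i : ℕ) = 2 * (i : ℕ)) (he₁ : ∀ i, (e₁ i : ℕ) = 2 * (i : ℕ) + 1)
  (hq1 : ∀ i, q (e₁ i) (e₀ i) = qi i) (hq2 : ∀ i, q (e₀ i) (e₁ i) = (qi i)⁻¹)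
  (hq3 : ∀ a b : Fin d,
      (∀ i, ¬(a = e₁ i ∧ b = e₀ i) ∧ ¬(a = e₀ i ∧ b = e₁ i)) → q a b = 1)

section qlemmas
include he₀ he₁ hq3

theorem qe₁row (i : Fin d) (l : Fin z) (h : i ≠ e₀ l) : q (e₁ l) i = 1 := by
  apply hq3
  intro t
  constructor
  · rintro ⟨h1, h2⟩
    have hv := congrArg Fin.val h1
    rw [he₁ l, he₁ t] at hv
    have : l = t := Fin.ext (by omega)
    exact h (by rw [h2, ← this])
  · rintro ⟨h1, _⟩
    have hv := congrArg Fin.val h1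
    rw [he₁ l, he₀ t] at hv
    omega

theorem qe₀row (i : Fin d) (l : Fin z) (h : i ≠ e₁ l) : q (e₀ l) i = 1 := by
  apply hq3
  intro t
  constructor
  · rintro ⟨h1, _⟩
    have hv := congrArg Fin.val h1
    rw [he₀ l, he₁ t] at hv
    omega
  · rintro ⟨h1, h2⟩
    have hv := congrArg Fin.val h1
    rw [he₀ l, he₀ t] at hv
    have : l = t := Fin.ext (by omega)
    exact h (by rw [h2, ← this])

theorem qe₁col (j : Fin d) (l : Fin z) (h : j ≠ e₀ l) : q j (e₁ l) = 1 := by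
  apply hq3
  intro t
  constructor
  · rintro ⟨_, h2⟩
    have hv := congrArg Fin.val h2
    rw [he₁ l, he₀ t] at hv
    omega
  · rintro ⟨h1, h2⟩
    have hv := congrArg Fin.val h2
    rw [he₁ l, he₁ t] at hv
    have : l = t := Fin.ext (by omega)
    exact h (by rw [h1, ← this])

theorem qe₀col (j : Fin d) (l : Fin z) (h : j ≠ e₁ l) : q j (e₀ l) = 1 := by
  apply hq3
  intro t
  constructor
  · rintro ⟨h1, h2⟩
    have hv := congrArg Fin.val h2
    rw [he₀ l, he₀ t] at hv
    have : l = t := Fin.ext (by omega)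
    exact h (by rw [h1, ← this])
  · rintro ⟨_, h2⟩
    have hv := congrArg Fin.val h2
    rw [he₀ l, he₁ t] at hv
    omega

end qlemmas

include he₀ he₁ hq1 hq2 hq3 in
theorem rad_dvd_mem (hq0 : ∀ i, qi i ^ (k i) = 1) (m : Fin d → ℤ)
    (hdvd : ∀ i, (k i : ℤ) ∣ m (e₀ i) ∧ (k i : ℤ) ∣ m (e₁ i)) :
    m ∈ radSet q := by
  have hinv : ∀ l, ((qi l)⁻¹) ^ (k l) = 1 := by
    intro l; rw [inv_pow, hq0 l, inv_one]
  intro n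
  have h1 : qsigma q m n = 1 := by
    apply Finset.prod_eq_one; intro j _
    apply Finset.prod_eq_one; intro i _
    split_ifs with hij
    · by_cases hc : ∀ l, ¬(j = e₁ l ∧ i = e₀ l) ∧ ¬(j = e₀ l ∧ i = e₁ l)
      · rw [hq3 j i hc, _root_.one_zpow]
      · push_neg at hc
        obtain ⟨l, hl⟩ := hc
        by_cases hc2 : j = e₁ l ∧ i = e₀ l
        · obtain ⟨rfl, rfl⟩ := hc2
          rw [hq1 l]; exact zpow_key (hq0 l) (hdvd l).1 _
        · obtain ⟨rfl, rfl⟩ := hl (fun h1 h2 => hc2 ⟨h1, h2⟩)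
          rw [hq2 l]; exact zpow_key (hinv l) (hdvd l).2 _
    · rfl
  have h2 : qsigma q n m = 1 := by
    apply Finset.prod_eq_one; intro j _
    apply Finset.prod_eq_one; intro i _
    split_ifs with hij
    · by_cases hc : ∀ l, ¬(j = e₁ l ∧ i = e₀ l) ∧ ¬(j = e₀ l ∧ i = e₁ l)
      · rw [hq3 j i hc, _root_.one_zpow]
      · push_neg at hc
        obtain ⟨l, hl⟩ := hc
        by_cases hc2 : j = e₁ l ∧ i = e₀ l
        · obtain ⟨rfl, rfl⟩ := hc2
          rw [hq1 l, mul_comm]; exact zpow_key (hq0 l) (hdvd l).2 _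
        · obtain ⟨rfl, rfl⟩ := hl (fun h1 h2 => hc2 ⟨h1, h2⟩)
          rw [hq2 l, mul_comm]; exact zpow_key (hinv l) (hdvd l).1 _
    · rfl
  rw [h1, h2]

include he₀ he₁ hq1 hq2 hq3 in
theorem rad_mem_dvd (hprim : ∀ i, IsPrimitiveRoot (qi i) (k i)) (m : Fin d → ℤ)
    (hm : m ∈ radSet q) (i₀ : Fin z) :
    (k i₀ : ℤ) ∣ m (e₀ i₀) ∧ (k i₀ : ℤ) ∣ m (e₁ i₀) := by
  have hlt : e₀ i₀ < e₁ i₀ := by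
    rw [Fin.lt_def, he₀ i₀, he₁ i₀]; omega
  constructor
  · have hA : qsigma q m (Pi.single (e₁ i₀) 1) = qi i₀ ^ (m (e₀ i₀)) := by
      unfold qsigma
      rw [Finset.prod_eq_single_of_mem (e₁ i₀) (Finset.mem_univ _)]
      · rw [Finset.prod_eq_single_of_mem (e₀ i₀) (Finset.mem_univ _)]
        · rw [if_pos hlt, Pi.single_eq_same, one_mul, hq1 i₀]
        · intro i _ hi
          split_ifs with h
          · rw [qe₁row he₀ he₁ hq3 i i₀ hi, _root_.one_zpow]
          · rfl
      · intro j _ hj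
        apply Finset.prod_eq_one
        intro i _
        split_ifs with h
        · rw [Pi.single_eq_of_ne hj, zero_mul, zpow_zero]
        · rfl
    have hB : qsigma q (Pi.single (e₁ i₀) 1) m = 1 := by
      apply Finset.prod_eq_one; intro j _
      apply Finset.prod_eq_one; intro i _
      split_ifs with hij
      · by_cases hi : i = e₁ i₀
        · subst hi
          rw [qe₁col he₀ he₁ hq3 j i₀ ?_, _root_.one_zpow]
          intro hj
          subst hj
          exact absurd (hij.trans hlt) (lt_irrefl _)
        · rw [Pi.single_eq_of_ne hi, mul_zero, zpow_zero]
      · rfl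
    have := hm (Pi.single (e₁ i₀) 1)
    rw [hA, hB] at this
    exact ((hprim i₀).zpow_eq_one_iff_dvd _).mp this
  · have hC : qsigma q m (Pi.single (e₀ i₀) 1) = 1 := by
      apply Finset.prod_eq_one; intro j _
      apply Finset.prod_eq_one; intro i _
      split_ifs with hij
      · by_cases hj : j = e₀ i₀
        · subst hj
          rw [qe₀row he₀ he₁ hq3 i i₀ ?_, _root_.one_zpow]
          intro hi
          subst hi
          exact absurd (hlt.trans hij) (lt_irrefl _)
        · rw [Pi.single_eq_of_ne hj, zero_mul, zpow_zero]
      · rfl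
    have hD : qsigma q (Pi.single (e₀ i₀) 1) m = qi i₀ ^ (m (e₁ i₀)) := by
      unfold qsigma
      rw [Finset.prod_eq_single_of_mem (e₁ i₀) (Finset.mem_univ _)]
      · rw [Finset.prod_eq_single_of_mem (e₀ i₀) (Finset.mem_univ _)]
        · rw [if_pos hlt, Pi.single_eq_same, mul_one, hq1 i₀]
        · intro i _ hi
          split_ifs with h
          · rw [Pi.single_eq_of_ne hi, mul_zero, zpow_zero]
          · rfl
      · intro j _ hj
        apply Finset.prod_eq_one
        intro i _
        split_ifs with h
        · by_cases hi : i = e₀ i₀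
          · subst hi
            rw [Pi.single_eq_same, mul_one, qe₀col he₀ he₁ hq3 j i₀ hj, _root_.one_zpow]
          · rw [Pi.single_eq_of_ne hi, mul_zero, zpow_zero]
        · rfl
    have := hm (Pi.single (e₀ i₀) 1)
    rw [hC, hD] at this
    exact ((hprim i₀).zpow_eq_one_iff_dvd _).mp this.symm

end rad

open Module

section graded
variable {W : Type*} [AddCommGroup W] [Module ℂ W] {Γ : Type*}
  (Wg : Γ → Submodule ℂ W)

theorem components_unique (hWgindep : iSupIndep Wg)
    (cfun : Γ →₀ W) (hc : ∀ γ, cfun γ ∈ Wg γ)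
    (hsum : (cfun.sum fun _ w => w) = 0) (γ : Γ) : cfun γ = 0 := by
  classical
  by_cases hγ : γ ∈ cfun.support
  · have hsplit : cfun γ + ∑ δ ∈ cfun.support.erase γ, cfun δ = 0 := by
      rw [Finset.add_sum_erase _ _ hγ]
      exact hsum
    have h1 : cfun γ = -∑ δ ∈ cfun.support.erase γ, cfun δ :=
      eq_neg_of_add_eq_zero_left hsplit
    have h2 : cfun γ ∈ ⨆ δ, ⨆ _ : δ ≠ γ, Wg δ := by
      rw [h1]
      apply Submodule.neg_mem
      apply Submodule.sum_mem
      intro δ hδ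
      have hne : δ ≠ γ := Finset.ne_of_mem_erase hδ
      exact Submodule.mem_iSup_of_mem δ (Submodule.mem_iSup_of_mem hne (hc δ))
    have := (hWgindep γ).le_bot ⟨hc γ, h2⟩
    simpa using this
  · simpa using Finsupp.notMem_support_iff.mp hγ

theorem ker_graded (hWgindep : iSupIndep Wg) (hWgtop : (⨆ γ, Wg γ) = ⊤)
    (g : Module.End ℂ W) (hg : ∀ γ, ∀ w ∈ Wg γ, g w ∈ Wg γ) :
    LinearMap.ker g = ⨆ γ, LinearMap.ker g ⊓ Wg γ := by
  classical
  apply le_antisymm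
  · intro x hx
    have hxtop : x ∈ ⨆ γ, Wg γ := hWgtop ▸ Submodule.mem_top
    rw [Submodule.mem_iSup_iff_exists_finsupp] at hxtop
    obtain ⟨cfun, hc, hsum⟩ := hxtop
    have hgc : ∀ γ, g (cfun γ) = 0 := by
      have hmap : ((cfun.mapRange g (map_zero g)).sum fun _ w => w) = 0 := by
        rw [Finsupp.sum_mapRange_index (by simp)]
        have : (cfun.sum fun _ w => g w) = g (cfun.sum fun _ w => w) := by
          rw [Finsupp.sum, Finsupp.sum, map_sum]
        rw [this, hsum]
        exact LinearMap.mem_ker.mp hx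
      intro γ
      have := components_unique Wg hWgindep (cfun.mapRange g (map_zero g))
        (fun γ => by simp only [Finsupp.mapRange_apply]; exact hg γ _ (hc γ)) hmap γ
      simpa using this
    rw [← hsum]
    apply Submodule.sum_mem
    intro γ _
    exact Submodule.mem_iSup_of_mem γ ⟨LinearMap.mem_ker.mpr (hgc γ), hc γ⟩
  · exact iSup_le fun γ => inf_le_left

end graded

theorem psi1_scalar {W : Type*} [AddCommGroup W] [Module ℂ W] [FiniteDimensional ℂ W]
    [Nontrivial W] {Γ : Type*} (ψ1 : Module.End ℂ W) (ops : Set (Module.End ℂ W))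
    (hcomm : ∀ f ∈ ops, Commute ψ1 f)
    (Wg : Γ → Submodule ℂ W) (hWgindep : iSupIndep Wg) (hWgtop : (⨆ γ, Wg γ) = ⊤)
    (hpres : ∀ γ, ∀ w ∈ Wg γ, ψ1 w ∈ Wg γ)
    (hirr : ∀ U : Submodule ℂ W, (∀ f ∈ ops, ∀ w ∈ U, f w ∈ U) →
      (U = ⨆ γ, U ⊓ Wg γ) → U = ⊥ ∨ U = ⊤) :
    ∃ lam : ℂ, ψ1 = lam • 1 := by
  classical
  set r := finrank ℂ W with hr
  have hNpres : ∀ (μ : ℂ) (p : ℕ) (γ : Γ), ∀ w ∈ Wg γ, ((ψ1 - μ • 1) ^ p) w ∈ Wg γ := by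
    intro μ p γ
    induction p with
    | zero => intro w hw; simpa using hw
    | succ p ih =>
      intro w hw
      rw [pow_succ, Module.End.mul_apply]
      have h1 : (ψ1 - μ • 1) w ∈ Wg γ := by
        have he : (ψ1 - μ • 1) w = ψ1 w - μ • w := by
          simp [LinearMap.sub_apply]
        rw [he]
        exact Submodule.sub_mem _ (hpres γ w hw) (Submodule.smul_mem _ _ hw)
      exact ih _ h1
  have hNcomm : ∀ (μ : ℂ) (p : ℕ) f, f ∈ ops → Commute ((ψ1 - μ • 1) ^ p) f := by
    intro μ p f hf
    exact ((hcomm f hf).sub_left (Commute.smul_left (Commute.one_left f) μ)).pow_left p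
  have hker : ∀ (μ : ℂ) (p : ℕ), LinearMap.ker ((ψ1 - μ • 1) ^ p) = ⊥ ∨
      LinearMap.ker ((ψ1 - μ • 1) ^ p) = ⊤ := by
    intro μ p
    apply hirr
    · intro f hf w hw
      rw [LinearMap.mem_ker] at hw ⊢
      calc ((ψ1 - μ • 1) ^ p) (f w) = (((ψ1 - μ • 1) ^ p) * f) w := rfl
      _ = (f * ((ψ1 - μ • 1) ^ p)) w := by rw [hNcomm μ p f hf]
      _ = f (((ψ1 - μ • 1) ^ p) w) := rfl
      _ = 0 := by rw [hw, map_zero]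
    · exact ker_graded Wg hWgindep hWgtop _ (hNpres μ p)
  have hμeq : ∀ μ : ℂ, ψ1.maxGenEigenspace μ = LinearMap.ker ((ψ1 - μ • 1) ^ r) := by
    intro μ
    rw [Module.End.maxGenEigenspace_eq_genEigenspace_finrank, Module.End.genEigenspace_nat]
  have htop : ⨆ μ : ℂ, LinearMap.ker ((ψ1 - μ • 1) ^ r) = ⊤ := by
    calc ⨆ μ : ℂ, LinearMap.ker ((ψ1 - μ • 1) ^ r) = ⨆ μ : ℂ, ψ1.maxGenEigenspace μ :=
          iSup_congr fun μ => (hμeq μ).symm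
    _ = ⊤ := Module.End.iSup_maxGenEigenspace_eq_top ψ1
  obtain ⟨μ₀, hμ₀⟩ : ∃ μ₀ : ℂ, LinearMap.ker ((ψ1 - μ₀ • 1) ^ r) = ⊤ := by
    by_contra hc
    push_neg at hc
    have hbot : ∀ μ : ℂ, LinearMap.ker ((ψ1 - μ • 1) ^ r) = ⊥ :=
      fun μ => (hker μ r).resolve_right (hc μ)
    have htb : (⊤ : Submodule ℂ W) = ⊥ := by
      rw [← htop]
      exact le_antisymm (iSup_le fun μ => le_of_eq (hbot μ)) bot_le
    obtain ⟨w, hw⟩ := exists_ne (0 : W)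
    exact hw (Submodule.mem_bot ℂ |>.mp (htb ▸ Submodule.mem_top))
  have hnil : ((ψ1 - μ₀ • 1) ^ r) = 0 := LinearMap.ker_eq_top.mp hμ₀
  have hK1 := hker μ₀ 1
  rw [pow_one] at hK1
  rcases hK1 with hbot | htop1
  · exfalso
    have hinj1 : Function.Injective ⇑(ψ1 - μ₀ • 1) := LinearMap.ker_eq_bot.mp hbot
    have hinj : ∀ p : ℕ, Function.Injective ⇑((ψ1 - μ₀ • 1) ^ p) := by
      intro p
      induction p with
      | zero => rw [pow_zero]; exact fun a b h => by simpa using h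
      | succ p ih =>
        rw [pow_succ]
        intro a b h
        simp only [Module.End.mul_apply] at h
        exact hinj1 (ih h)
    obtain ⟨w, hw⟩ := exists_ne (0 : W)
    apply hw
    apply hinj r
    rw [hnil]
    simp
  · exact ⟨μ₀, by rw [← sub_eq_zero]; exact LinearMap.ker_eq_top.mp htop1⟩

section mainproof
/-- if `V` is an irreducible `gl_d`-module and `W` an irreducible
`Γ`-graded `gl_N`-module, then the tensor field module
`F^α(V,W) = ⊕_s V ⊗ W_{s̄} ⊗ t^s` over `D ⋉ Z` (the centre `Z` acting by
`t^n·(v⊗w⊗t^s) = v⊗w⊗t^{n+s}`, `n ∈ R`) is irreducible, and every weight space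
(for the Cartan subalgebra `span{D(u,0)}`, the weight of `V⊗W_{s̄}⊗t^s` being
`(u|α+s)`) has dimension at most `dim V · dim W`, i.e. it is cuspidal. -/
theorem stmt18 {d z : ℕ} (h2z : 2 * z ≤ d)
    (k : Fin z → ℕ) (hk : ∀ i, 0 < k i)
    (qi : Fin z → ℂ) (hprim : ∀ i, IsPrimitiveRoot (qi i) (k i))
    (e₀ e₁ : Fin z → Fin d)
    (he₀ : ∀ i, (e₀ i : ℕ) = 2 * (i : ℕ)) (he₁ : ∀ i, (e₁ i : ℕ) = 2 * (i : ℕ) + 1)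
    (q : Fin d → Fin d → ℂ)
    (hq1 : ∀ i, q (e₁ i) (e₀ i) = qi i)
    (hq2 : ∀ i, q (e₀ i) (e₁ i) = (qi i)⁻¹)
    (hq3 : ∀ a b : Fin d,
      (∀ i, ¬(a = e₁ i ∧ b = e₀ i) ∧ ¬(a = e₀ i ∧ b = e₁ i)) → q a b = 1)
    (S : AddSubgroup (Fin d → ℤ)) (hS : (S : Set (Fin d → ℤ)) = radSet q)
    (α : Fin d → ℂ)
    (V : Type*) [AddCommGroup V] [Module ℂ V] [FiniteDimensional ℂ V] [Nontrivial V]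
    (θ : Matrix (Fin d) (Fin d) ℂ →ₗ⁅ℂ⁆ Module.End ℂ V)
    (hVirr : ∀ U : Submodule ℂ V, (∀ M, ∀ v ∈ U, θ M v ∈ U) → U = ⊥ ∨ U = ⊤)
    (W : Type*) [AddCommGroup W] [Module ℂ W] [FiniteDimensional ℂ W] [Nontrivial W]
    (ψ : Matrix (Π i, Fin (k i)) (Π i, Fin (k i)) ℂ →ₗ⁅ℂ⁆ Module.End ℂ W)
    (Wg : ((Fin d → ℤ) ⧸ S) → Submodule ℂ W)
    (hWgindep : iSupIndep Wg) (hWgtop : (⨆ γ, Wg γ) = ⊤)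
    (hWgcompat : ∀ (n : Fin d → ℤ) γ, ∀ w ∈ Wg γ,
      ψ (Xbig k qi e₀ e₁ n) w ∈ Wg ((QuotientAddGroup.mk n : (Fin d → ℤ) ⧸ S) + γ))
    (hWirr : ∀ U : Submodule ℂ W,
      (∀ n : Fin d → ℤ, ∀ w ∈ U, ψ (Xbig k qi e₀ e₁ n) w ∈ U) →
      (U = ⨆ γ, U ⊓ Wg γ) → U = ⊥ ∨ U = ⊤)
    (Dop : (Fin d → ℂ) → (Fin d → ℤ) → Module.End ℂ ((Fin d → ℤ) →₀ (V ⊗[ℂ] W)))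
    (Topr Zop : (Fin d → ℤ) → Module.End ℂ ((Fin d → ℤ) →₀ (V ⊗[ℂ] W)))
    (hDop : ∀ (u : Fin d → ℂ) (m s : Fin d → ℤ) (v : V) (w : W),
      Dop u m (Finsupp.single s (v ⊗ₜ[ℂ] w))
        = Finsupp.single (m + s)
            (((∑ i, u i * (α i + (s i : ℂ))) • v
              + θ (Matrix.of fun i j => (m i : ℂ) * u j) v) ⊗ₜ[ℂ] w))
    (hTop : ∀ (r s : Fin d → ℤ) (v : V) (w : W),
      Topr r (Finsupp.single s (v ⊗ₜ[ℂ] w))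
        = Finsupp.single (r + s) (v ⊗ₜ[ℂ] ψ (Xbig k qi e₀ e₁ r) w))
    (hZop : ∀ (n s : Fin d → ℤ) (v : V) (w : W),
      Zop n (Finsupp.single s (v ⊗ₜ[ℂ] w))
        = Finsupp.single (n + s) (v ⊗ₜ[ℂ] w))
    (Fsub : Submodule ℂ ((Fin d → ℤ) →₀ (V ⊗[ℂ] W)))
    (hFsub : Fsub = Submodule.span ℂ
      {x : (Fin d → ℤ) →₀ (V ⊗[ℂ] W) | ∃ s v w,
        w ∈ Wg (QuotientAddGroup.mk s) ∧ x = Finsupp.single s (v ⊗ₜ[ℂ] w)}) :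
    Fsub ≠ ⊥ ∧
    (∀ U : Submodule ℂ ((Fin d → ℤ) →₀ (V ⊗[ℂ] W)), U ≤ Fsub →
      (∀ (u : Fin d → ℂ), ∀ m ∈ radSet q, ∀ x ∈ U, Dop u m x ∈ U) →
      (∀ r ∉ radSet q, ∀ x ∈ U, Topr r x ∈ U) →
      (∀ n ∈ radSet q, ∀ x ∈ U, Zop n x ∈ U) →
      U = ⊥ ∨ U = Fsub) ∧
    (∀ s : Fin d → ℤ,
      Module.finrank ℂ
        ↥(Fsub ⊓ ⨅ u : Fin d → ℂ,
            Module.End.eigenspace (Dop u 0) (∑ i, u i * (α i + (s i : ℂ))))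
        ≤ Module.finrank ℂ V * Module.finrank ℂ W) := by
  classical
  obtain ⟨v₁, hv₁⟩ := exists_ne (0 : V)
  -- radical facts
  have hrad : ∀ m : Fin d → ℤ, m ∈ radSet q ↔
      ∀ i, ((k i : ℤ) ∣ m (e₀ i) ∧ (k i : ℤ) ∣ m (e₁ i)) := by
    intro m
    constructor
    · intro h i; exact rad_mem_dvd he₀ he₁ hq1 hq2 hq3 hprim m h i
    · intro h; exact rad_dvd_mem he₀ he₁ hq1 hq2 hq3 (fun i => (hprim i).pow_eq_one) m h
  have hSrad : ∀ m : Fin d → ℤ, m ∈ S ↔ m ∈ radSet q := by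
    intro m
    rw [← SetLike.mem_coe, hS]
  have hrad0 : (0 : Fin d → ℤ) ∈ radSet q := (hSrad 0).mp S.zero_mem
  have hradneg : ∀ m : Fin d → ℤ, m ∈ radSet q → -m ∈ radSet q := by
    intro m hm
    exact (hSrad _).mp (S.neg_mem ((hSrad m).mpr hm))
  -- Xbig on the radical is the identity matrix
  have hXone : ∀ n : Fin d → ℤ, n ∈ radSet q → Xbig k qi e₀ e₁ n = 1 := by
    intro n hn
    have hdvd := (hrad n).mp hn
    ext a b
    show (∏ i : Fin z,
      (zpowM (Xdiag (k i) (qi i)) (k i) (n (e₀ i))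
        * zpowM (Yshift (k i)) (k i) (n (e₁ i))) (a i) (b i)) = (1 : Matrix _ _ ℂ) a b
    have hfac : ∀ i, (zpowM (Xdiag (k i) (qi i)) (k i) (n (e₀ i))
        * zpowM (Yshift (k i)) (k i) (n (e₁ i))) = 1 := by
      intro i
      unfold zpowM
      rw [Int.emod_eq_zero_of_dvd (hdvd i).1, Int.emod_eq_zero_of_dvd (hdvd i).2]
      norm_num
    rw [Finset.prod_congr rfl (fun i _ => by rw [hfac i])]
    by_cases hab : a = b
    · subst hab
      rw [Matrix.one_apply_eq]
      exact Finset.prod_eq_one fun i _ => Matrix.one_apply_eq _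
    · obtain ⟨i, hi⟩ := Function.ne_iff.mp hab
      rw [Matrix.one_apply_ne hab]
      exact Finset.prod_eq_zero (Finset.mem_univ i) (Matrix.one_apply_ne hi)
  -- the weight function
  let c : (Fin d → ℂ) → (Fin d → ℤ) → ℂ := fun u t => ∑ i, u i * (α i + (t i : ℂ))
  -- action of Dop u 0 on singles
  have hD0 : ∀ (u : Fin d → ℂ) (t : Fin d → ℤ) (y : V ⊗[ℂ] W),
      Dop u 0 (Finsupp.single t y) = Finsupp.single t (c u t • y) := by
    intro u t y
    induction y using TensorProduct.induction_on with
    | zero => simp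
    | tmul v w =>
      have h := hDop u 0 t v w
      rw [zero_add] at h
      have hθ0 : θ (Matrix.of fun i j => (((0 : Fin d → ℤ) i : ℤ) : ℂ) * u j) = 0 := by
        have : (Matrix.of fun i j => (((0 : Fin d → ℤ) i : ℤ) : ℂ) * u j)
            = (0 : Matrix (Fin d) (Fin d) ℂ) := by
          ext i j
          simp
        rw [this, _root_.map_zero θ]
      rw [hθ0] at h
      simp only [LinearMap.zero_apply, add_zero] at h
      rw [h]
      congr 1
    | add y₁ y₂ ih₁ ih₂ =>
      rw [Finsupp.single_add, map_add, ih₁, ih₂, smul_add, Finsupp.single_add]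
  have hD0pt : ∀ (u : Fin d → ℂ) (x : (Fin d → ℤ) →₀ (V ⊗[ℂ] W)) (t : Fin d → ℤ),
      (Dop u 0 x) t = c u t • x t := by
    intro u x
    induction x using Finsupp.induction_linear with
    | zero => simp
    | add f g ihf ihg =>
      intro t
      rw [map_add, Finsupp.add_apply, ihf, ihg, Finsupp.add_apply, smul_add]
    | single s y =>
      intro t
      rw [hD0, Finsupp.single_apply, Finsupp.single_apply]
      split_ifs with h
      · subst h; rfl
      · rw [smul_zero]
  -- weight separation
  have hsep : ∀ t s : Fin d → ℤ, t ≠ s → ∃ u, c u t ≠ c u s := by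
    intro t s hts
    obtain ⟨i, hi⟩ := Function.ne_iff.mp hts
    refine ⟨Pi.single i 1, ?_⟩
    have hct : ∀ t' : Fin d → ℤ,
        (∑ j, Pi.single (M := fun _ => ℂ) i 1 j * (α j + (t' j : ℂ))) = α i + (t' i : ℂ) := by
      intro t'
      rw [Finset.sum_eq_single i]
      · rw [Pi.single_eq_same, one_mul]
      · intro j _ hj
        rw [Pi.single_eq_of_ne hj, zero_mul]
      · intro h; exact absurd (Finset.mem_univ i) h
    show (∑ j, Pi.single (M := fun _ => ℂ) i 1 j * (α j + (t j : ℂ)))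
        ≠ (∑ j, Pi.single (M := fun _ => ℂ) i 1 j * (α j + (s j : ℂ)))
    rw [hct, hct]
    intro h
    exact hi (by exact_mod_cast add_left_cancel h)
  -- nonzero element of Fsub (part 1)
  obtain ⟨γ₀, hγ₀⟩ : ∃ γ, Wg γ ≠ ⊥ := by
    by_contra hcon
    push_neg at hcon
    have : (⊤ : Submodule ℂ W) = ⊥ := by
      rw [← hWgtop]
      exact le_antisymm (iSup_le fun γ => le_of_eq (hcon γ)) bot_le
    obtain ⟨w, hw⟩ := exists_ne (0 : W)
    exact hw (Submodule.mem_bot ℂ |>.mp (this ▸ Submodule.mem_top))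
  obtain ⟨s₀, rfl⟩ := QuotientAddGroup.mk_surjective γ₀
  obtain ⟨w₀, hw₀Wg, hw₀⟩ := Submodule.ne_bot_iff _ |>.mp hγ₀
  have hgen₀ : Finsupp.single s₀ (v₁ ⊗ₜ[ℂ] w₀) ∈ Fsub := by
    rw [hFsub]
    exact Submodule.subset_span ⟨s₀, v₁, w₀, hw₀Wg, rfl⟩
  have hne₀ : Finsupp.single s₀ (v₁ ⊗ₜ[ℂ] w₀) ≠ 0 := by
    intro h
    exact my_tmul_ne_zero hv₁ hw₀ (by simpa using (Finsupp.single_eq_zero).mp h)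
  refine ⟨?_, ?_, ?_⟩
  · -- Fsub ≠ ⊥
    intro h
    rw [h] at hgen₀
    exact hne₀ (Submodule.mem_bot ℂ |>.mp hgen₀)
  · -- irreducibility
    intro U hUF hUD hUT hUZ
    by_cases hUbot : U = ⊥
    · left; exact hUbot
    right
    let Us : (Fin d → ℤ) → Submodule ℂ (V ⊗[ℂ] W) := fun s =>
      U.comap (Finsupp.lsingle s)
    have hUsmem : ∀ s y, y ∈ Us s ↔ Finsupp.single s y ∈ U := by
      intro s y
      rw [Submodule.mem_comap, Finsupp.lsingle_apply]
    let Y : (Fin d → ℤ) → Submodule ℂ W := fun s =>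
      (Us s).comap ((TensorProduct.mk ℂ V W) v₁)
    have hYmem : ∀ s w, w ∈ Y s ↔ Finsupp.single s (v₁ ⊗ₜ[ℂ] w) ∈ U := by
      intro s w
      rw [Submodule.mem_comap]
      exact hUsmem s _
    -- components of U elements are in U
    have hcomp : ∀ x ∈ U, ∀ s, Finsupp.single s (x s) ∈ U := by
      have key : ∀ N : ℕ, ∀ x ∈ U, x.support.card ≤ N →
          ∀ s, Finsupp.single s (x s) ∈ U := by
        intro N
        induction N with
        | zero =>
          intro x hx hcard s
          have hx0 : x = 0 := by
            rw [← Finsupp.support_eq_empty]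
            exact Finset.card_eq_zero.mp (Nat.le_zero.mp hcard)
          subst hx0
          simp only [Finsupp.coe_zero, Pi.zero_apply, Finsupp.single_zero]
          exact U.zero_mem
        | succ N ih =>
          intro x hx hcard s
          by_cases hxs : x s = 0
          · rw [hxs, Finsupp.single_zero]; exact U.zero_mem
          by_cases hsub : ∀ t ∈ x.support, t = s
          · have hxe : x = Finsupp.single s (x s) := by
              ext t
              rw [Finsupp.single_apply]
              split_ifs with h
              · subst h; rfl
              · by_contra h0
                exact h ((hsub t (Finsupp.mem_support_iff.mpr h0)).symm)
            rw [← hxe]; exact hx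
          · push_neg at hsub
            obtain ⟨t₁, ht₁supp, ht₁⟩ := hsub
            obtain ⟨u, hu⟩ := hsep s t₁ (Ne.symm ht₁)
            set y := Dop u 0 x - c u t₁ • x with hy
            have hyU : y ∈ U := U.sub_mem (hUD u 0 hrad0 x hx) (U.smul_mem _ hx)
            have hyt : ∀ t, y t = (c u t - c u t₁) • x t := by
              intro t
              rw [hy, Finsupp.sub_apply, Finsupp.smul_apply, hD0pt, sub_smul]
            have hy1 : y t₁ = 0 := by rw [hyt, sub_self, zero_smul]
            have hsupp : y.support ⊆ x.support.erase t₁ := by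
              intro t ht
              have h1 : y t ≠ 0 := Finsupp.mem_support_iff.mp ht
              rw [Finset.mem_erase]
              constructor
              · intro h; rw [h] at h1; exact h1 hy1
              · rw [Finsupp.mem_support_iff]
                intro h0; exact h1 (by rw [hyt, h0, smul_zero])
            have hcard' : y.support.card ≤ N := by
              have h1 := Finset.card_le_card hsupp
              rw [Finset.card_erase_of_mem ht₁supp] at h1
              omega
            have hind := ih y hyU hcard' s
            rw [hyt s] at hind
            have hc0 : c u s - c u t₁ ≠ 0 := sub_ne_zero.mpr hu
            have hfin := U.smul_mem (c u s - c u t₁)⁻¹ hind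
            rw [Finsupp.smul_single, smul_smul, inv_mul_cancel₀ hc0, one_smul] at hfin
            exact hfin
      intro x hx s; exact key x.support.card x hx le_rfl s
    -- components of Fsub
    let VWg : ((Fin d → ℤ) ⧸ S) → Submodule ℂ (V ⊗[ℂ] W) := fun γ =>
      Submodule.span ℂ {x | ∃ v w, w ∈ Wg γ ∧ x = v ⊗ₜ[ℂ] w}
    have hFcomp : ∀ x ∈ Fsub, ∀ s, x s ∈ VWg (QuotientAddGroup.mk s) := by
      intro x hx
      rw [hFsub] at hx
      induction hx using Submodule.span_induction with
      | mem x hxm =>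
        obtain ⟨s', v, w, hw, rfl⟩ := hxm
        intro s
        rw [Finsupp.single_apply]
        split_ifs with h
        · subst h
          exact Submodule.subset_span ⟨v, w, hw, rfl⟩
        · exact Submodule.zero_mem _
      | zero => intro s; simp only [Finsupp.coe_zero, Pi.zero_apply]; exact Submodule.zero_mem _
      | add a b _ _ iha ihb =>
        intro s
        rw [Finsupp.add_apply]
        exact Submodule.add_mem _ (iha s) (ihb s)
      | smul r a _ iha =>
        intro s
        rw [Finsupp.smul_apply]
        exact Submodule.smul_mem _ r (iha s)
    -- extraction of W-component
    obtain ⟨φ₁, hφ₁⟩ := exists_dual_one hv₁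
    let κ1 : V ⊗[ℂ] W →ₗ[ℂ] W :=
      (TensorProduct.lid ℂ W).toLinearMap ∘ₗ TensorProduct.map φ₁ LinearMap.id
    have hκ1v₁ : ∀ w : W, κ1 (v₁ ⊗ₜ[ℂ] w) = w := by
      intro w
      simp only [κ1, LinearMap.comp_apply, TensorProduct.map_tmul, hφ₁,
        LinearMap.id_coe, id_eq, LinearEquiv.coe_coe, TensorProduct.lid_tmul, one_smul]
    have hκ1Wg : ∀ γ x, x ∈ VWg γ → κ1 x ∈ Wg γ := by
      intro γ x hx
      induction hx using Submodule.span_induction with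
      | mem x hxm =>
        obtain ⟨v, w, hw, rfl⟩ := hxm
        simp only [κ1, LinearMap.comp_apply, TensorProduct.map_tmul,
          LinearMap.id_coe, id_eq, LinearEquiv.coe_coe, TensorProduct.lid_tmul]
        exact Submodule.smul_mem _ _ hw
      | zero => rw [map_zero]; exact Submodule.zero_mem _
      | add a b _ _ iha ihb => rw [map_add]; exact Submodule.add_mem _ iha ihb
      | smul r a _ iha => rw [_root_.map_smul]; exact Submodule.smul_mem _ r iha
    have hYW : ∀ s, Y s ≤ Wg (QuotientAddGroup.mk s) := by
      intro s w hw
      have h1 : Finsupp.single s (v₁ ⊗ₜ[ℂ] w) ∈ Fsub := hUF ((hYmem s w).mp hw)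
      have h2 := hFcomp _ h1 s
      rw [Finsupp.single_eq_same] at h2
      have := hκ1Wg _ _ h2
      rwa [hκ1v₁] at this
    -- Burnside
    have hAtop : Algebra.adjoin ℂ (Set.range fun M => θ M) = ⊤ := by
      apply my_burnside
      intro U' hU'
      apply hVirr
      intro M v hv
      exact hU' (θ M) (Algebra.subset_adjoin ⟨M, rfl⟩) v hv
    -- the θ-invariance of the components Us s
    have hθinv : ∀ (m : Fin d → ℤ), m ∈ radSet q → ∀ (u : Fin d → ℂ) (s : Fin d → ℤ)
        (y : V ⊗[ℂ] W), Finsupp.single s y ∈ U →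
        Finsupp.single s
          (TensorProduct.map (θ (Matrix.of fun i j => ((m i : ℤ) : ℂ) * u j)) LinearMap.id y)
          ∈ U := by
      intro m hm u s y hy
      have hZsingle : ∀ (n t : Fin d → ℤ) (y : V ⊗[ℂ] W),
          Zop n (Finsupp.single t y) = Finsupp.single (n + t) y := by
        intro n t y
        induction y using TensorProduct.induction_on with
        | zero => simp
        | tmul v w => exact hZop n t v w
        | add y₁ y₂ ih₁ ih₂ =>
          rw [Finsupp.single_add, map_add, ih₁, ih₂, Finsupp.single_add]
      have h1 : ∀ y : V ⊗[ℂ] W, Dop u m (Finsupp.single s y) - c u s • Zop m (Finsupp.single s y)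
          = Finsupp.single (m + s)
            (TensorProduct.map (θ (Matrix.of fun i j => ((m i : ℤ) : ℂ) * u j))
              LinearMap.id y) := by
        intro y
        induction y using TensorProduct.induction_on with
        | zero => simp
        | tmul v w =>
          rw [hDop, hZsingle, Finsupp.smul_single, ← Finsupp.single_sub]
          congr 1
          rw [TensorProduct.add_tmul, TensorProduct.smul_tmul', TensorProduct.map_tmul]
          simp only [LinearMap.id_coe, id_eq]
          abel
        | add y₁ y₂ ih₁ ih₂ =>
          rw [Finsupp.single_add, map_add, map_add, smul_add]
          have habel : Dop u m (Finsupp.single s y₁) + Dop u m (Finsupp.single s y₂)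
              - (c u s • Zop m (Finsupp.single s y₁) + c u s • Zop m (Finsupp.single s y₂))
              = (Dop u m (Finsupp.single s y₁) - c u s • Zop m (Finsupp.single s y₁))
              + (Dop u m (Finsupp.single s y₂) - c u s • Zop m (Finsupp.single s y₂)) := by
            abel
          rw [habel, ih₁, ih₂, ← Finsupp.single_add, ← map_add]
      have h1' := h1 y
      have h2 : Dop u m (Finsupp.single s y) - c u s • Zop m (Finsupp.single s y) ∈ U :=
        U.sub_mem (hUD u m hm _ hy) (U.smul_mem _ (hUZ m hm _ hy))
      rw [h1'] at h2
      have h3 := hUZ (-m) (hradneg m hm) _ h2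
      rw [hZsingle, neg_add_cancel_left] at h3
      exact h3
    -- all matrices act
    have hMS : ∀ (M : Matrix (Fin d) (Fin d) ℂ) (s : Fin d → ℤ) (y : V ⊗[ℂ] W),
        Finsupp.single s y ∈ U →
        Finsupp.single s (TensorProduct.map (θ M) LinearMap.id y) ∈ U := by
      let MS : Submodule ℂ (Matrix (Fin d) (Fin d) ℂ) :=
        { carrier := {M | ∀ s y, Finsupp.single s y ∈ U →
            Finsupp.single s (TensorProduct.map (θ M) LinearMap.id y) ∈ U}
          add_mem' := by
            intro M M' hM hM' s y hy
            rw [_root_.map_add θ, TensorProduct.map_add_left, LinearMap.add_apply, Finsupp.single_add]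
            exact U.add_mem (hM s y hy) (hM' s y hy)
          zero_mem' := by
            intro s y hy
            rw [_root_.map_zero θ]
            have hz : TensorProduct.map (0 : V →ₗ[ℂ] V) (LinearMap.id : W →ₗ[ℂ] W) y = 0 := by
              have : TensorProduct.map (0 : V →ₗ[ℂ] V) (LinearMap.id : W →ₗ[ℂ] W)
                  = (0 : V ⊗[ℂ] W →ₗ[ℂ] V ⊗[ℂ] W) := by
                apply TensorProduct.ext'
                intro v w
                simp
              rw [this]; rfl
            rw [hz, Finsupp.single_zero]
            exact U.zero_mem
          smul_mem' := by
            intro r M hM s y hy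
            rw [_root_.map_smul θ, TensorProduct.map_smul_left, LinearMap.smul_apply,
              ← Finsupp.smul_single]
            exact U.smul_mem r (hM s y hy) }
      set cK : ℤ := ∏ l, (k l : ℤ) with hcK
      have hcK0 : (cK : ℂ) ≠ 0 := by
        rw [hcK]
        push_cast
        apply Finset.prod_ne_zero_iff.mpr
        intro l _
        exact Nat.cast_ne_zero.mpr (Nat.pos_iff_ne_zero.mp (hk l))
      have hmemrad : ∀ i : Fin d, (Pi.single i cK : Fin d → ℤ) ∈ radSet q := by
        intro i
        apply (hrad _).mpr
        intro l
        constructor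
        · rw [Pi.single_apply]
          split_ifs with h
          · rw [hcK]; exact Finset.dvd_prod_of_mem _ (Finset.mem_univ l)
          · exact dvd_zero _
        · rw [Pi.single_apply]
          split_ifs with h
          · rw [hcK]; exact Finset.dvd_prod_of_mem _ (Finset.mem_univ l)
          · exact dvd_zero _
      have hMtop : ∀ M : Matrix (Fin d) (Fin d) ℂ, M ∈ MS := by
        intro M
        rw [Matrix.matrix_eq_sum_single M]
        apply Submodule.sum_mem
        intro i _
        apply Submodule.sum_mem
        intro j _
        have hrk : (Matrix.of fun i' j' => (((Pi.single i cK : Fin d → ℤ) i' : ℤ) : ℂ)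
            * (Pi.single (M := fun _ => ℂ) j 1) j') ∈ MS := by
          intro s' y' hy'
          exact hθinv (Pi.single i cK) (hmemrad i) (Pi.single (M := fun _ => ℂ) j 1) s' y' hy'
        have heq : Matrix.single i j (M i j) = (M i j * ((cK : ℂ))⁻¹) •
            (Matrix.of fun i' j' => (((Pi.single i cK : Fin d → ℤ) i' : ℤ) : ℂ)
              * (Pi.single (M := fun _ => ℂ) j 1) j') := by
          ext i' j'
          simp only [Matrix.single, Matrix.of_apply, Matrix.smul_apply,
            Pi.single_apply, smul_eq_mul]
          by_cases h1 : i = i' <;> by_cases h2 : j = j'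
          · subst h1; subst h2
            simp only [if_pos rfl, and_self, if_true]
            field_simp
          · simp [h1, h2, Ne.symm h2]
          · simp [h1, h2, Ne.symm h1]
          · simp [h1, h2, Ne.symm h1, Ne.symm h2]
        rw [heq]
        exact MS.smul_mem _ hrk
      intro M
      exact hMtop M
    -- E ⊗ 1 invariance of components
    have hUsInv : ∀ s (E : Module.End ℂ V), ∀ y ∈ Us s,
        TensorProduct.map E LinearMap.id y ∈ Us s := by
      intro s
      let AE : Subalgebra ℂ (Module.End ℂ V) :=
        { carrier := {E | ∀ y ∈ Us s, TensorProduct.map E LinearMap.id y ∈ Us s}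
          mul_mem' := by
            intro E E' hE hE' y hy
            have hcomp : TensorProduct.map (E * E') (LinearMap.id : W →ₗ[ℂ] W)
                = TensorProduct.map E LinearMap.id ∘ₗ TensorProduct.map E' LinearMap.id := by
              rw [← TensorProduct.map_comp]
              rfl
            rw [hcomp, LinearMap.comp_apply]
            exact hE _ (hE' y hy)
          one_mem' := by
            intro y hy
            have h1 : TensorProduct.map (1 : Module.End ℂ V) (LinearMap.id : W →ₗ[ℂ] W)
                = LinearMap.id := TensorProduct.map_id
            rw [h1]
            exact hy
          add_mem' := by
            intro E E' hE hE' y hy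
            rw [TensorProduct.map_add_left, LinearMap.add_apply]
            exact Submodule.add_mem _ (hE y hy) (hE' y hy)
          algebraMap_mem' := by
            intro r y hy
            have h0 : (algebraMap ℂ (Module.End ℂ V) r) = r • 1 :=
              Algebra.algebraMap_eq_smul_one r
            rw [h0, TensorProduct.map_smul_left, LinearMap.smul_apply]
            apply Submodule.smul_mem
            have h1 : TensorProduct.map (1 : Module.End ℂ V) (LinearMap.id : W →ₗ[ℂ] W)
                = LinearMap.id := TensorProduct.map_id
            rw [h1]
            exact hy }
      have hle : Algebra.adjoin ℂ (Set.range fun M => θ M) ≤ AE := by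
        apply Algebra.adjoin_le
        rintro _ ⟨M, rfl⟩ y hy
        rw [hUsmem] at hy ⊢
        exact hMS M s y hy
      intro E y hy
      exact hle (hAtop ▸ Algebra.mem_top) y hy
    -- extraction
    have hUsY : ∀ s, Us s = Submodule.span ℂ {x | ∃ v w, w ∈ Y s ∧ x = v ⊗ₜ[ℂ] w} := by
      intro s
      have h := extraction (Us s) (fun E y hy => hUsInv s E y hy) v₁ hv₁
      rw [h]
      congr 1
    -- shifts
    have hZsingle : ∀ (n t : Fin d → ℤ) (y : V ⊗[ℂ] W),
        Zop n (Finsupp.single t y) = Finsupp.single (n + t) y := by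
      intro n t y
      induction y using TensorProduct.induction_on with
      | zero => simp
      | tmul v w => exact hZop n t v w
      | add y₁ y₂ ih₁ ih₂ =>
        rw [Finsupp.single_add, map_add, ih₁, ih₂, Finsupp.single_add]
    have hYshift : ∀ n ∈ radSet q, ∀ s, Y s ≤ Y (n + s) := by
      intro n hn s w hw
      rw [hYmem] at hw ⊢
      have := hUZ n hn _ hw
      rwa [hZsingle] at this
    have hYeq : ∀ s t : Fin d → ℤ,
        (QuotientAddGroup.mk s : (Fin d → ℤ) ⧸ S) = QuotientAddGroup.mk t → Y s = Y t := by
      intro s t hst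
      have hmem : -s + t ∈ S := (QuotientAddGroup.eq).mp hst
      have h1 : Y s ≤ Y t := by
        have h := hYshift (-s + t) ((hSrad _).mp hmem) s
        have h3 : -s + t + s = t := by abel
        rwa [h3] at h
      have hmem' : -t + s ∈ S := by
        have := S.neg_mem hmem
        rwa [neg_add_rev, neg_neg] at this
      have h2 : Y t ≤ Y s := by
        have := hYshift (-t + s) ((hSrad _).mp hmem') t
        have h3 : -t + s + t = s := by abel
        rwa [h3] at this
      exact le_antisymm h1 h2
    have hTY : ∀ r ∉ radSet q, ∀ s, ∀ w ∈ Y s,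
        ψ (Xbig k qi e₀ e₁ r) w ∈ Y (r + s) := by
      intro r hr s w hw
      rw [hYmem] at hw ⊢
      have := hUT r hr _ hw
      rwa [hTop] at this
    -- ψ(1) is a scalar
    obtain ⟨lam, hlam⟩ : ∃ lam : ℂ,
        ψ (1 : Matrix (Π i, Fin (k i)) (Π i, Fin (k i)) ℂ) = lam • 1 := by
      apply psi1_scalar _ (Set.range fun n => ψ (Xbig k qi e₀ e₁ n))
      · rintro _ ⟨n, rfl⟩
        have h := ψ.map_lie (x := (1 : Matrix (Π i, Fin (k i)) (Π i, Fin (k i)) ℂ))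
          (y := Xbig k qi e₀ e₁ n)
        have h1 : ⁅(1 : Matrix (Π i, Fin (k i)) (Π i, Fin (k i)) ℂ), Xbig k qi e₀ e₁ n⁆
            = 0 := by
          rw [Ring.lie_def]
          simp
        rw [h1, _root_.map_zero ψ, Ring.lie_def] at h
        exact (sub_eq_zero.mp h.symm)
      · exact hWgindep
      · exact hWgtop
      · intro γ w hw
        have := hWgcompat 0 γ w hw
        rw [hXone 0 hrad0] at this
        have h0 : (QuotientAddGroup.mk (0 : Fin d → ℤ) : (Fin d → ℤ) ⧸ S) = 0 :=
          rfl
        rwa [h0, zero_add] at this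
      · intro U' hops hgr
        apply hWirr U' ?_ hgr
        intro n w hw
        exact hops _ ⟨n, rfl⟩ w hw
    -- the supremum of the Y's
    set UW : Submodule ℂ W := ⨆ s : Fin d → ℤ, Y s with hUW
    have hUWinv : ∀ n : Fin d → ℤ, ∀ w ∈ UW, ψ (Xbig k qi e₀ e₁ n) w ∈ UW := by
      intro n w hw
      refine Submodule.iSup_induction Y (motive := fun w => ψ (Xbig k qi e₀ e₁ n) w ∈ UW) hw
        ?_ ?_ ?_
      · intro s w' hw'
        by_cases hn : n ∈ radSet q
        · rw [hXone n hn, hlam]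
          have h1 : Y s ≤ UW := by rw [hUW]; exact le_iSup Y s
          have h2 : (lam • (1 : Module.End ℂ W)) w' = lam • w' := rfl
          rw [h2]
          exact UW.smul_mem lam (h1 hw')
        · have h3 : Y (n + s) ≤ UW := by rw [hUW]; exact le_iSup Y (n + s)
          exact h3 (hTY n hn s w' hw')
      · simpa using UW.zero_mem
      · intro a b ha hb
        rw [map_add]
        exact UW.add_mem ha hb
    have hUWgr : UW = ⨆ γ, UW ⊓ Wg γ := by
      apply le_antisymm
      · conv_lhs => rw [hUW]
        apply iSup_le
        intro s
        have h1 : Y s ≤ UW ⊓ Wg (QuotientAddGroup.mk s) := by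
          refine le_inf ?_ (hYW s)
          rw [hUW]; exact le_iSup Y s
        exact h1.trans (le_iSup (fun γ => UW ⊓ Wg γ) (QuotientAddGroup.mk s))
      · exact iSup_le fun γ => inf_le_left
    have hUWtop : UW = ⊤ := by
      rcases hWirr UW hUWinv hUWgr with h | h
      · exfalso
        obtain ⟨x, hxU, hx0⟩ := (Submodule.ne_bot_iff U).mp hUbot
        obtain ⟨s, hxs⟩ : ∃ s, x s ≠ 0 := by
          by_contra hc
          push_neg at hc
          exact hx0 (Finsupp.ext hc)
        have hxsU : x s ∈ Us s := (hUsmem s _).mpr (hcomp x hxU s)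
        rw [hUsY s] at hxsU
        have hYbot : Y s = ⊥ := by
          rw [hUW] at h
          exact le_bot_iff.mp ((le_iSup Y s).trans (le_of_eq h))
        apply hxs
        have hle : Submodule.span ℂ {x : V ⊗[ℂ] W | ∃ v w, w ∈ Y s ∧ x = v ⊗ₜ[ℂ] w}
            ≤ ⊥ := by
          apply Submodule.span_le.mpr
          rintro _ ⟨v, w, hw, rfl⟩
          rw [hYbot] at hw
          rw [Submodule.mem_bot ℂ |>.mp hw, TensorProduct.tmul_zero]
          exact Submodule.zero_mem _
        exact Submodule.mem_bot ℂ |>.mp (hle hxsU)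
      · exact h
    have hWgY : ∀ s : Fin d → ℤ, Wg (QuotientAddGroup.mk s) ≤ Y s := by
      intro s w hw
      have hwtop : w ∈ ⨆ t : Fin d → ℤ, Y t := by
        rw [← hUW, hUWtop]; exact Submodule.mem_top
      rw [Submodule.mem_iSup_iff_exists_finsupp] at hwtop
      obtain ⟨g, hg, hgsum⟩ := hwtop
      set P : (Fin d → ℤ) → Prop :=
        fun t => (QuotientAddGroup.mk t : (Fin d → ℤ) ⧸ S) = QuotientAddGroup.mk s with hP
      have hsplit : ∑ t ∈ g.support.filter P, g t + ∑ t ∈ g.support.filter (fun t => ¬ P t), g t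
          = w := by
        rw [Finset.sum_filter_add_sum_filter_not]
        exact hgsum
      set a := ∑ t ∈ g.support.filter P, g t with ha
      have haY : a ∈ Y s := by
        apply Submodule.sum_mem
        intro t ht
        rw [Finset.mem_filter] at ht
        rw [hYeq s t ht.2.symm]
        exact hg t
      have hbB : w - a ∈ ⨆ δ, ⨆ _ : δ ≠ (QuotientAddGroup.mk s : (Fin d → ℤ) ⧸ S), Wg δ := by
        have hwa : w - a = ∑ t ∈ g.support.filter (fun t => ¬ P t), g t := by
          rw [← hsplit]; abel
        rw [hwa]
        apply Submodule.sum_mem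
        intro t ht
        rw [Finset.mem_filter] at ht
        have h1 : g t ∈ Wg (QuotientAddGroup.mk t) := hYW t (hg t)
        exact Submodule.mem_iSup_of_mem _ (Submodule.mem_iSup_of_mem ht.2 h1)
      have hWa : w - a ∈ Wg (QuotientAddGroup.mk s) :=
        Submodule.sub_mem _ hw (hYW s haY)
      have h0 : w - a = 0 := by
        have hdis := hWgindep (QuotientAddGroup.mk s : (Fin d → ℤ) ⧸ S)
        exact (Submodule.disjoint_def.mp hdis) _ hWa hbB
      have : w = a := by rwa [sub_eq_zero] at h0
      rw [this]
      exact haY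
    -- finish: Fsub ≤ U
    apply le_antisymm hUF
    intro x hxF
    rw [← Finsupp.sum_single x]
    apply Submodule.sum_mem
    intro t _
    have h1 : x t ∈ VWg (QuotientAddGroup.mk t) := hFcomp x hxF t
    have h2 : VWg (QuotientAddGroup.mk t) ≤ Us t := by
      rw [hUsY t]
      apply Submodule.span_le.mpr
      rintro _ ⟨v, w, hw, rfl⟩
      exact Submodule.subset_span ⟨v, w, hWgY t hw, rfl⟩
    exact (hUsmem t _).mp (h2 h1)
  · -- weight space bound
    intro s
    set M : Submodule ℂ ((Fin d → ℤ) →₀ (V ⊗[ℂ] W)) :=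
      LinearMap.range (Finsupp.lsingle s : (V ⊗[ℂ] W) →ₗ[ℂ] _) with hM
    have hinj : Function.Injective (Finsupp.lsingle (M := V ⊗[ℂ] W) (R := ℂ) s) := by
      intro a b hab
      have := congrArg (fun f => f s) hab
      simpa [Finsupp.lsingle_apply, Finsupp.single_eq_same] using this
    let e : (V ⊗[ℂ] W) ≃ₗ[ℂ] M := LinearEquiv.ofInjective _ hinj
    haveI : Module.Finite ℂ M := Module.Finite.equiv e
    have hle : Fsub ⊓ (⨅ u : Fin d → ℂ,
        Module.End.eigenspace (Dop u 0) (∑ i, u i * (α i + (s i : ℂ)))) ≤ M := by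
      intro x hx
      have hx2 := (Submodule.mem_inf.mp hx).2
      have heig : ∀ u : Fin d → ℂ, Dop u 0 x = c u s • x := by
        intro u
        rw [Submodule.mem_iInf] at hx2
        have h := hx2 u
        rw [Module.End.mem_eigenspace_iff] at h
        exact h
      have hzero : ∀ t, t ≠ s → x t = 0 := by
        intro t hts
        obtain ⟨u, hu⟩ := hsep t s hts
        have h1 := congrArg (fun f => f t) (heig u)
        simp only [Finsupp.smul_apply] at h1
        rw [hD0pt] at h1
        have h2 : (c u t - c u s) • x t = 0 := by
          rw [sub_smul, h1, sub_self]
        rcases smul_eq_zero.mp h2 with h | h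
        · exact absurd (sub_eq_zero.mp h) hu
        · exact h
      refine ⟨x s, ?_⟩
      rw [Finsupp.lsingle_apply]
      ext t
      rw [Finsupp.single_apply]
      split_ifs with h
      · subst h; rfl
      · exact (hzero t (fun hc => h hc.symm)).symm
    have hfr : Module.finrank ℂ M = Module.finrank ℂ V * Module.finrank ℂ W := by
      rw [← Module.finrank_tensorProduct (R := ℂ) (S := ℂ) (M := V) (M' := W)]
      exact (LinearEquiv.finrank_eq e).symm
    exact hfr ▸ Submodule.finrank_mono hle

end mainproof
end
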